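/- arXiv:2103.08534 — 10 statements merged into one kernel-verified Lean document; each statement's English description precedes it below -/
import Mathlib

section
/- Let μ be a Borel probability measure on D and λ > 0. Then μ P_t = e^{−λ t} μ holds for all t ≥ 0 if and only if μ G = (1/λ) μ, where μG denotes the measure A ↦ ∫_D G(x,A) μ(dx). -/
open MeasureTheory Filter Set Topology
open scoped ENNReal

noncomputable section

/-- `f` belongs to `C_b(D)`: bounded and continuous on `D`. -/
def MemCb {X : Type*} [TopologicalSpace X] (D : Set X) (f : X → ℝ) : Prop :=
  ContinuousOn f D ∧ ∃ M : ℝ, ∀ x ∈ D, |f x| ≤ M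

/-- `f` belongs to `C_0(D)`: bounded continuous on `D` and `f x → 0` as `x → ∂_K D = Dᶜ`
within `D`. -/
def MemC0 {X : Type*} [TopologicalSpace X] (D : Set X) (f : X → ℝ) : Prop :=
  MemCb D f ∧ Tendsto f ((𝓝ˢ Dᶜ) ⊓ 𝓟 D) (𝓝 (0 : ℝ))

/-- A sub-Markovian semigroup on `D`: a family `(P t)` of sub-Markov kernels concentrated on
`D`, jointly measurable, with `P 0` the identity, satisfying the Chapman–Kolmogorov equations,
and with uniformly exponentially decaying total mass `P t x D ≤ C e^{-Λ t}`. -/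
structure SubMarkovSemigroup {X : Type*} [MeasurableSpace X] (D : Set X) where
  P : ℝ → X → Measure X
  measurable_apply : ∀ A : Set X, MeasurableSet A → Measurable fun p : ℝ × X => P p.1 p.2 A
  subMarkov : ∀ t : ℝ, 0 ≤ t → ∀ x ∈ D, P t x Set.univ ≤ 1
  supported : ∀ t : ℝ, 0 ≤ t → ∀ x ∈ D, P t x Dᶜ = 0
  init : ∀ x ∈ D, P 0 x = Measure.dirac x
  semigroup : ∀ s : ℝ, 0 ≤ s → ∀ t : ℝ, 0 ≤ t → ∀ x ∈ D, ∀ A : Set X, MeasurableSet A →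
      P (s + t) x A = ∫⁻ y, P t y A ∂ (P s x)
  decay : ∃ C : ℝ, 0 < C ∧ ∃ Λ : ℝ, 0 < Λ ∧ ∀ t : ℝ, 0 ≤ t → ∀ x ∈ D,
      P t x D ≤ ENNReal.ofReal (C * Real.exp (-Λ * t))

/-- The Green kernel applied to a function: `G f x = ∫_0^∞ P_t f (x) dt`. -/
def greenFn {X : Type*} [MeasurableSpace X] (P : ℝ → X → Measure X) (f : X → ℝ) (x : X) : ℝ :=
  ∫ t in Set.Ici (0 : ℝ), ∫ y, f y ∂ (P t x)

/-- The Green kernel as a measure: `G(x, A) = ∫_0^∞ P_t(x, A) dt`. -/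
def greenMeas {X : Type*} [MeasurableSpace X] (P : ℝ → X → Measure X) (x : X) (A : Set X) :
    ℝ≥0∞ :=
  ∫⁻ t in Set.Ici (0 : ℝ), P t x A

/-- `μ` is a quasi-stationary distribution for the semigroup `P` on `D`, with absorption rate
`lam`: `μ` is a probability measure on `D` and `μ P_t = e^{-lam t} μ` for all `t ≥ 0`. -/
def IsQSD {X : Type*} [MeasurableSpace X] (P : ℝ → X → Measure X) (D : Set X)
    (lam : ℝ) (μ : Measure X) : Prop :=
  0 < lam ∧ IsProbabilityMeasure μ ∧ μ Dᶜ = 0 ∧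
    ∀ t : ℝ, 0 ≤ t → ∀ A : Set X, MeasurableSet A → A ⊆ D →
      ∫⁻ x, P t x A ∂μ = ENNReal.ofReal (Real.exp (-lam * t)) * μ A

/-- The exponential integral `∫_0^∞ e^{-λ s} ds = 1/λ`, in `ℝ≥0∞` form. -/
lemma lintegral_exp_neg_mul (lam : ℝ) (hlam : 0 < lam) :
    ∫⁻ s in Set.Ici (0 : ℝ), ENNReal.ofReal (Real.exp (-lam * s)) = ENNReal.ofReal (1 / lam) := by
  have hint : IntegrableOn (fun s : ℝ => Real.exp (-lam * s)) (Set.Ici 0) :=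
    (integrableOn_Ici_iff_integrableOn_Ioi).mpr (exp_neg_integrableOn_Ioi 0 hlam)
  rw [← ofReal_integral_eq_lintegral_ofReal hint
      (ae_of_all _ fun s => (Real.exp_pos _).le)]
  congr 1
  have h1 : ∫ s in Set.Ici (0 : ℝ), Real.exp (-lam * s)
      = ∫ s in Set.Ioi (0 : ℝ), (fun x => Real.exp (-x)) (s * lam) := by
    rw [MeasureTheory.integral_Ici_eq_integral_Ioi]
    congr 1
    ext s
    simp only
    congr 1
    ring
  rw [h1, MeasureTheory.integral_comp_mul_right_Ioi (fun x => Real.exp (-x)) 0 hlam,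
    zero_mul, integral_exp_neg_Ioi_zero]
  simp [one_div]

/-- a probability measure `μ` on `D` satisfies `μ P_t = e^{-lam t} μ` for all
`t ≥ 0` if and only if `μ G = (1/lam) μ`, where `G` is the Green kernel. -/
theorem isQSD_iff_green_eigenmeasure
    {X : Type*} [MetricSpace X] [CompactSpace X] [MeasurableSpace X] [BorelSpace X]
    (D : Set X) (hD : IsOpen D) (hDne : D.Nonempty)
    (S : SubMarkovSemigroup D)
    (μ : Measure X) (hμ : IsProbabilityMeasure μ) (hμD : μ Dᶜ = 0)
    (lam : ℝ) (hlam : 0 < lam) :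
    (∀ t : ℝ, 0 ≤ t → ∀ A : Set X, MeasurableSet A → A ⊆ D →
        ∫⁻ x, S.P t x A ∂μ = ENNReal.ofReal (Real.exp (-lam * t)) * μ A) ↔
    (∀ A : Set X, MeasurableSet A → A ⊆ D →
        ∫⁻ x, greenMeas S.P x A ∂μ = ENNReal.ofReal (1 / lam) * μ A) := by
  have hDm : MeasurableSet D := hD.measurableSet
  have hae : ∀ᵐ x ∂μ, x ∈ D := by
    rw [ae_iff]; exact hμD
  -- measurability facts
  have mPx : ∀ (B : Set X), MeasurableSet B → ∀ t : ℝ, Measurable fun x => S.P t x B := by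
    intro B hB t
    exact (S.measurable_apply B hB).comp (measurable_const.prodMk measurable_id)
  have mPs : ∀ (B : Set X), MeasurableSet B → ∀ x : X, Measurable fun s => S.P s x B := by
    intro B hB x
    exact (S.measurable_apply B hB).comp (measurable_id.prodMk measurable_const)
  have mker : ∀ x : X, Measurable fun s => S.P s x := fun x =>
    Measure.measurable_of_measurable_coe _ fun B hB => mPs B hB x
  have swap : ∀ F : ℝ × X → ℝ≥0∞, Measurable F →
      ∫⁻ x, (∫⁻ s in Set.Ici (0:ℝ), F (s, x)) ∂μ
        = ∫⁻ s in Set.Ici (0:ℝ), ∫⁻ x, F (s, x) ∂μ := by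
    intro F hF
    exact lintegral_lintegral_swap ((hF.comp measurable_swap).aemeasurable)
  constructor
  · -- forward direction
    intro h A hA hAD
    calc ∫⁻ x, greenMeas S.P x A ∂μ
        = ∫⁻ s in Set.Ici (0:ℝ), ∫⁻ x, S.P s x A ∂μ := swap _ (S.measurable_apply A hA)
      _ = ∫⁻ s in Set.Ici (0:ℝ), ENNReal.ofReal (Real.exp (-lam * s)) * μ A :=
          setLIntegral_congr_fun_ae measurableSet_Ici (ae_of_all _ fun s hs => h s hs A hA hAD)
      _ = (∫⁻ s in Set.Ici (0:ℝ), ENNReal.ofReal (Real.exp (-lam * s))) * μ A :=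
          lintegral_mul_const _ ((Real.measurable_exp.comp
            ((measurable_id.const_mul (-lam)))).ennreal_ofReal)
      _ = ENNReal.ofReal (1 / lam) * μ A := by rw [lintegral_exp_neg_mul lam hlam]
  · -- reverse direction
    intro h t ht A hA hAD
    obtain ⟨C, hC, Λ, hΛ, hdec⟩ := S.decay
    set g : ℝ → ℝ≥0∞ := fun s => ∫⁻ x, S.P s x A ∂μ with hg_def
    have hg_meas : Measurable g := by
      rw [hg_def]
      refine Measurable.lintegral_prod_right ?_
      exact S.measurable_apply A hA
    have hg_le : ∀ s : ℝ, 0 ≤ s → g s ≤ ENNReal.ofReal (C * Real.exp (-Λ * s)) := by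
      intro s hs
      calc g s ≤ ∫⁻ _x, ENNReal.ofReal (C * Real.exp (-Λ * s)) ∂μ :=
            lintegral_mono_ae (hae.mono fun x hx =>
              le_trans (measure_mono hAD) (hdec s hs x hx))
        _ = ENNReal.ofReal (C * Real.exp (-Λ * s)) := by simp
    have hg_ne_top : ∀ s : ℝ, 0 ≤ s → g s ≠ ⊤ := fun s hs =>
      (lt_of_le_of_lt (hg_le s hs) ENNReal.ofReal_lt_top).ne
    -- the key renewal identity
    have key2 : ∀ u : ℝ, 0 ≤ u →
        ∫⁻ s in Set.Ici u, g s = ENNReal.ofReal (1 / lam) * g u := by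
      intro u hu
      have htr : ∫⁻ s in Set.Ici u, g s = ∫⁻ s in Set.Ici (0:ℝ), g (s + u) := by
        have hmp : MeasurePreserving (· + u) (volume : Measure ℝ) volume :=
          measurePreserving_add_right volume u
        have hpre : (· + u) ⁻¹' Set.Ici u = Set.Ici (0:ℝ) := by
          ext s; simp [le_add_iff_nonneg_left]
        calc ∫⁻ s in Set.Ici u, g s
            = ∫⁻ s in Set.Ici u, g s ∂(Measure.map (· + u) volume) := by rw [hmp.map_eq]
          _ = ∫⁻ s in (· + u) ⁻¹' Set.Ici u, g (s + u) :=
              setLIntegral_map measurableSet_Ici hg_meas (measurable_add_const u)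
          _ = ∫⁻ s in Set.Ici (0:ℝ), g (s + u) := by rw [hpre]
      set Gf : X → Measure X :=
        fun x => (volume.restrict (Set.Ici (0:ℝ))).bind fun s => S.P s x with hGf_def
      have hGf_apply : ∀ (x : X) (B : Set X), MeasurableSet B →
          Gf x B = ∫⁻ s in Set.Ici (0:ℝ), S.P s x B := fun x B hB =>
        Measure.bind_apply hB (mker x).aemeasurable
      have hGf_meas : Measurable Gf := by
        refine Measure.measurable_of_measurable_coe _ fun B hB => ?_
        have hfe : (fun x => Gf x B) = fun x => ∫⁻ s in Set.Ici (0:ℝ), S.P s x B :=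
          funext fun x => hGf_apply x B hB
        rw [hfe]
        refine Measurable.lintegral_prod_left ?_
        exact S.measurable_apply B hB
      set ν : Measure X := μ.bind Gf with hν_def
      have hν_eq : ∀ B : Set X, MeasurableSet B →
          ν B = ∫⁻ x, greenMeas S.P x B ∂μ := by
        intro B hB
        rw [Measure.bind_apply hB hGf_meas.aemeasurable]
        exact lintegral_congr fun x => hGf_apply x B hB
      have hνDc : ν Dᶜ = 0 := by
        rw [hν_eq Dᶜ hDm.compl]
        have : ∀ᵐ x ∂μ, greenMeas S.P x Dᶜ = 0 := by
          refine hae.mono fun x hx => ?_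
          unfold greenMeas
          rw [setLIntegral_congr_fun_ae measurableSet_Ici
            (ae_of_all _ fun s hs => S.supported s hs x hx)]
          simp
        rw [lintegral_congr_ae this, lintegral_zero]
      have hν : ν = ENNReal.ofReal (1 / lam) • μ := by
        ext B hB
        have hsplit : ν (B ∩ D) + ν (B \ D) = ν B := measure_inter_add_diff B hDm
        have h2 : ν (B \ D) = 0 :=
          le_antisymm (le_trans (measure_mono (diff_subset_compl B D)) hνDc.le) (by simp)
        have h3 : μ (B \ D) = 0 :=
          le_antisymm (le_trans (measure_mono (diff_subset_compl B D)) hμD.le) (by simp)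
        have h4 : μ (B ∩ D) = μ B := by
          have := measure_inter_add_diff B hDm (μ := μ)
          rw [h3, add_zero] at this; exact this
        have h1 : ν (B ∩ D) = ENNReal.ofReal (1 / lam) * μ (B ∩ D) := by
          rw [hν_eq _ (hB.inter hDm)]
          exact h (B ∩ D) (hB.inter hDm) inter_subset_right
        rw [← hsplit, h1, h2, add_zero, h4, Measure.smul_apply, smul_eq_mul]
      have hsg : ∫⁻ s in Set.Ici (0:ℝ), g (s + u) = ∫⁻ y, S.P u y A ∂ν := by
        have mm : Measurable fun p : ℝ × X => S.P (p.1 + u) p.2 A :=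
          (S.measurable_apply A hA).comp ((measurable_fst.add_const u).prodMk measurable_snd)
        calc ∫⁻ s in Set.Ici (0:ℝ), g (s + u)
            = ∫⁻ x, (∫⁻ s in Set.Ici (0:ℝ), S.P (s + u) x A) ∂μ := (swap _ mm).symm
          _ = ∫⁻ x, (∫⁻ y, S.P u y A ∂(Gf x)) ∂μ := by
              refine lintegral_congr_ae (hae.mono fun x hx => ?_)
              show (∫⁻ s in Set.Ici (0:ℝ), S.P (s + u) x A) = ∫⁻ y, S.P u y A ∂(Gf x)
              rw [setLIntegral_congr_fun_ae measurableSet_Ici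
                (ae_of_all _ fun s hs => S.semigroup s hs u hu x hx A hA)]
              exact (Measure.lintegral_bind (mker x).aemeasurable (mPx A hA u).aemeasurable).symm
          _ = ∫⁻ y, S.P u y A ∂ν := (Measure.lintegral_bind hGf_meas.aemeasurable (mPx A hA u).aemeasurable).symm
      rw [htr, hsg, hν, lintegral_smul_measure, smul_eq_mul]
    -- pass to real-valued functions
    set f : ℝ → ℝ := Set.indicator (Set.Ici (0:ℝ)) (fun s => (g s).toReal) with hf_def
    have hf_meas : Measurable f := (hg_meas.ennreal_toReal).indicator measurableSet_Ici
    have hf_nonneg : ∀ s, 0 ≤ f s := fun s =>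
      Set.indicator_nonneg (fun s _ => ENNReal.toReal_nonneg) s
    have hf_eq : ∀ s : ℝ, 0 ≤ s → f s = (g s).toReal := fun s hs =>
      Set.indicator_of_mem hs _
    have hgf : ∀ s : ℝ, 0 ≤ s → g s = ENNReal.ofReal (f s) := fun s hs => by
      rw [hf_eq s hs, ENNReal.ofReal_toReal (hg_ne_top s hs)]
    have hf_int : Integrable f volume := by
      rw [hf_def, integrable_indicator_iff measurableSet_Ici]
      refine Integrable.mono' (g := fun s => C * Real.exp (-Λ * s))
        ((integrableOn_Ici_iff_integrableOn_Ioi).mpr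
          ((exp_neg_integrableOn_Ioi 0 hΛ).const_mul C))
        (hg_meas.ennreal_toReal).aestronglyMeasurable.restrict ?_
      refine (ae_restrict_iff' measurableSet_Ici).2 (ae_of_all _ fun s hs => ?_)
      rw [Real.norm_eq_abs, abs_of_nonneg ENNReal.toReal_nonneg]
      exact ENNReal.toReal_le_of_le_ofReal (by positivity) (hg_le s hs)
    set F : ℝ → ℝ := fun u => ∫ s in Set.Ici u, f s with hF_def
    have hF_nonneg : ∀ u, 0 ≤ F u := fun u => integral_nonneg hf_nonneg
    have R1 : ∀ u : ℝ, 0 ≤ u → f u = lam * F u := by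
      intro u hu
      have h1 : ∫⁻ s in Set.Ici u, g s = ∫⁻ s in Set.Ici u, ENNReal.ofReal (f s) :=
        setLIntegral_congr_fun_ae measurableSet_Ici
          (ae_of_all _ fun s hs => hgf s (le_trans hu hs))
      have h2 : ENNReal.ofReal (F u) = ∫⁻ s in Set.Ici u, ENNReal.ofReal (f s) :=
        ofReal_integral_eq_lintegral_ofReal hf_int.integrableOn
          (ae_of_all _ hf_nonneg)
      have h3 := key2 u hu
      have hol : (0:ℝ) ≤ 1 / lam := le_of_lt (div_pos one_pos hlam)
      rw [h1, ← h2, hgf u hu, ← ENNReal.ofReal_mul hol] at h3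
      have hFu : F u = 1 / lam * f u :=
        (ENNReal.ofReal_eq_ofReal_iff (hF_nonneg u)
          (mul_nonneg hol (hf_nonneg u))).1 h3
      rw [hFu]
      field_simp
    set Fl : ℝ → ℝ := fun u => F 0 - ∫ s in (0:ℝ)..u, f s with hFl_def
    have R2 : ∀ u : ℝ, 0 ≤ u → F u = Fl u := by
      intro u hu
      have hsplit : F 0 = (∫ s in Set.Ioc 0 u, f s) + F u := by
        rw [hF_def]
        simp only
        rw [MeasureTheory.integral_Ici_eq_integral_Ioi,
          MeasureTheory.integral_Ici_eq_integral_Ioi, ← Set.Ioc_union_Ioi_eq_Ioi hu,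
          setIntegral_union (Set.Ioc_disjoint_Ioi le_rfl) measurableSet_Ioi
            hf_int.integrableOn hf_int.integrableOn]
      rw [hFl_def]
      simp only
      rw [intervalIntegral.integral_of_le hu]
      linarith
    have hFl_cont : Continuous Fl :=
      continuous_const.sub (hf_int.continuous_primitive 0)
    have hfFl : ∀ u : ℝ, 0 ≤ u → f u = lam * Fl u := fun u hu => by
      rw [← R2 u hu]; exact R1 u hu
    have hf_cw : ∀ u : ℝ, 0 ≤ u → ContinuousWithinAt f (Set.Ioi u) u := by
      intro u hu
      have hc : ContinuousWithinAt (fun s => lam * Fl s) (Set.Ioi u) u :=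
        ((continuous_const.mul hFl_cont).continuousAt).continuousWithinAt
      exact hc.congr (fun y hy => hfFl y (le_trans hu (le_of_lt hy))) (hfFl u hu)
    have hderiv : ∀ u : ℝ, 0 ≤ u → HasDerivWithinAt Fl (-(f u)) (Set.Ici u) u := by
      intro u hu
      have hd : HasDerivWithinAt (fun b => ∫ s in (0:ℝ)..b, f s) (f u) (Set.Ici u) u :=
        intervalIntegral.integral_hasDerivWithinAt_right hf_int.intervalIntegrable
          (hf_meas.stronglyMeasurable.stronglyMeasurableAtFilter)
          (hf_cw u hu)
      have := (hasDerivWithinAt_const u (Set.Ici u) (F 0)).sub hd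
      rw [zero_sub] at this
      exact this
    -- the exponential times Fl is constant on [0, ∞)
    have hφ : Real.exp (lam * t) * Fl t = Fl 0 := by
      have hconst := constant_of_has_deriv_right_zero
        (f := fun u => Real.exp (lam * u) * Fl u) (a := 0) (b := t)
        ((Real.continuous_exp.comp (continuous_const.mul continuous_id)).mul
          hFl_cont).continuousOn ?_ t (Set.right_mem_Icc.2 ht)
      · simpa using hconst
      · intro u hu
        have hu0 : 0 ≤ u := hu.1
        have h1 : HasDerivWithinAt (fun v => Real.exp (lam * v))
            (Real.exp (lam * u) * (lam * 1)) (Set.Ici u) u :=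
          (((hasDerivAt_id u).const_mul lam).exp).hasDerivWithinAt
        have h2 := h1.mul (hderiv u hu0)
        have h3 : Real.exp (lam * u) * (lam * 1) * Fl u
            + Real.exp (lam * u) * -(f u) = 0 := by
          rw [hfFl u hu0]; ring
        rw [h3] at h2
        exact h2
    have hFl0 : Fl 0 = F 0 := by
      rw [hFl_def]; simp
    have hFlt : Fl t = Real.exp (-lam * t) * F 0 := by
      have h := hφ
      rw [hFl0] at h
      have hexp : (0:ℝ) < Real.exp (lam * t) := Real.exp_pos _
      have hre : Real.exp (-lam * t) = (Real.exp (lam * t))⁻¹ := by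
        rw [neg_mul, Real.exp_neg]
      rw [hre, inv_mul_eq_div, eq_div_iff hexp.ne']
      rw [mul_comm]
      exact h
    -- conclude
    have hg0 : g 0 = μ A := by
      have h1 : g 0 = ∫⁻ x, A.indicator (fun _ => (1:ℝ≥0∞)) x ∂μ := by
        refine lintegral_congr_ae (hae.mono fun x hx => ?_)
        show S.P 0 x A = A.indicator (fun _ => (1:ℝ≥0∞)) x
        rw [S.init x hx, Measure.dirac_apply' x hA]
        rfl
      rw [h1]
      exact lintegral_indicator_one (μ := μ) hA
    have hgt : g t = ENNReal.ofReal (Real.exp (-lam * t)) * g 0 := by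
      rw [hgf t ht, hgf 0 le_rfl, hfFl t ht, hfFl 0 le_rfl, hFl0, hFlt,
        ← ENNReal.ofReal_mul (Real.exp_pos _).le]
      congr 1
      ring
    rw [← hg0]
    exact hgt
end
end

section
/- Let h ∈ C_0(D) with h(x) > 0 for every x ∈ D and suppose G h = (1/λ) h for some λ > 0 (h is a positive right eigenfunction of the Green kernel). Then: (a) P_t h = e^{−λ t} h for all t ≥ 0; (b) if μ is any quasi-stationary distribution with absorption rate λ', then λ' = λ. -/
open MeasureTheory Filter Set Topology
open scoped ENNReal

noncomputable section

lemma ode_exp_decay {f : ℝ → ℝ} {c lam : ℝ} (hf : Continuous f)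
    (heq : ∀ s : ℝ, 0 ≤ s → f s = c - lam * ∫ t in (0:ℝ)..s, f t) :
    ∀ b : ℝ, 0 ≤ b → f b = c * Real.exp (-(lam * b)) := by
  intro b hb
  set φ : ℝ → ℝ := fun s => c - lam * ∫ t in (0:ℝ)..s, f t with hφ
  have hder : ∀ s : ℝ, HasDerivAt φ (-(lam * f s)) s := by
    intro s
    have h1 : HasDerivAt (fun u => ∫ t in (0:ℝ)..u, f t) (f s) s :=
      intervalIntegral.integral_hasDerivAt_right (hf.intervalIntegrable _ _)
        (hf.stronglyMeasurableAtFilter _ _) hf.continuousAt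
    simpa [neg_mul] using ((h1.const_mul lam).const_sub c)
  set Z : ℝ → ℝ := fun s => φ s * Real.exp (lam * s) with hZ
  have hZder : ∀ s ∈ Ico (0:ℝ) b, HasDerivWithinAt Z 0 (Ici s) s := by
    intro s hs
    have he : HasDerivAt (fun u => Real.exp (lam * u)) (Real.exp (lam * s) * lam) s := by
      simpa using ((hasDerivAt_id s).const_mul lam).exp
    have := (hder s).mul he
    have hfs : φ s = f s := (heq s hs.1).symm
    have h0 : -(lam * f s) * Real.exp (lam * s) + φ s * (Real.exp (lam * s) * lam) = 0 := by
      rw [hfs]; ring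
    exact (h0 ▸ this).hasDerivWithinAt
  have hcont : ContinuousOn Z (Icc 0 b) := by
    apply Continuous.continuousOn
    exact ((continuous_const.sub (continuous_const.mul (intervalIntegral.continuous_primitive
      (fun a b => hf.intervalIntegrable a b) 0))).mul
      (Real.continuous_exp.comp (continuous_const.mul continuous_id)))
  have hZb : Z b = Z 0 := constant_of_has_deriv_right_zero hcont hZder b ⟨hb, le_refl b⟩
  have hZ0 : Z 0 = c := by simp [hZ, hφ]
  have hfb : f b = φ b := heq b hb
  have hexp : Real.exp (lam * b) ≠ 0 := Real.exp_ne_zero _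
  have : φ b * Real.exp (lam * b) = c := by rw [← hZ0]; exact hZb
  rw [hfb, Real.exp_neg]
  field_simp at this ⊢
  linarith [this]

lemma measurable_indicator_of_continuousOn {X : Type*} [TopologicalSpace X] [MeasurableSpace X]
    [OpensMeasurableSpace X] {D : Set X} (hD : IsOpen D) {f : X → ℝ}
    (hf : ContinuousOn f D) : Measurable (D.indicator f) := by
  have hemb : MeasurableEmbedding ((↑) : D → X) :=
    MeasurableEmbedding.subtype_coe hD.measurableSet
  have hg : Measurable (fun z : D => f z) :=
    (continuousOn_iff_continuous_restrict.mp hf).measurable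
  have := hemb.measurable_extend hg (measurable_const (a := (0:ℝ)))
  convert this using 1
  funext x
  by_cases hx : x ∈ D
  · rw [Set.indicator_of_mem hx]
    exact (Subtype.val_injective.extend_apply (fun z : D => f z) (fun _ => 0) ⟨x, hx⟩).symm
  · rw [Set.indicator_of_notMem hx, Function.extend_apply']
    rintro ⟨a, rfl⟩
    exact hx a.2

lemma lintegral_Ici_shift {g : ℝ → ℝ≥0∞} (hg : Measurable g) (s : ℝ) :
    ∫⁻ t in Ici s, g t = ∫⁻ t in Ici 0, g (s + t) := by
  have h1 : (volume : Measure ℝ).restrict (Ici s)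
      = Measure.map (· + s) (volume.restrict (Ici 0)) := by
    have hpre : ((· + s) ⁻¹' Ici s : Set ℝ) = Ici 0 := by ext t; simp
    conv_lhs => rw [← map_add_right_eq_self (volume : Measure ℝ) s]
    rw [Measure.restrict_map (measurable_add_const s) measurableSet_Ici, hpre]
  rw [h1, lintegral_map hg (measurable_add_const s)]
  congr 1
  funext t
  rw [add_comm]
/-- if `h ∈ C_0(D)` is a positive right eigenfunction of the Green kernel,
`G h = (1/lam) h`, then (a) `P_t h = e^{-lam t} h` on `D` for all `t ≥ 0`, and (b) the
absorption rate of any quasi-stationary distribution equals `lam`. -/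
theorem right_eigenfunction_semigroup_and_rate
    {X : Type*} [MetricSpace X] [CompactSpace X] [MeasurableSpace X] [BorelSpace X]
    (D : Set X) (hD : IsOpen D) (hDne : D.Nonempty)
    (S : SubMarkovSemigroup D)
    (lam : ℝ) (hlam : 0 < lam) (h : X → ℝ) (hC0 : MemC0 D h) (hpos : ∀ x ∈ D, 0 < h x)
    (heig : ∀ x ∈ D, greenFn S.P h x = (1 / lam) * h x) :
    (∀ t : ℝ, 0 ≤ t → ∀ x ∈ D, ∫ y, h y ∂ (S.P t x) = Real.exp (-lam * t) * h x) ∧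
    (∀ lam' : ℝ, ∀ μ : Measure X, IsQSD S.P D lam' μ → lam' = lam) := by
  classical
  obtain ⟨⟨hconth, M, hM⟩, -⟩ := hC0
  obtain ⟨C, hC, Λ, hΛ, hdecay⟩ := S.decay
  set h' : X → ℝ := D.indicator h with hh'def
  have hh'meas : Measurable h' := measurable_indicator_of_continuousOn hD hconth
  have hh'nonneg : ∀ x, 0 ≤ h' x := by
    intro x
    by_cases hx : x ∈ D
    · rw [hh'def, Set.indicator_of_mem hx]; exact (hpos x hx).le
    · rw [hh'def, Set.indicator_of_notMem hx]
  have hh'eqD : ∀ x ∈ D, h' x = h x := fun x hx => Set.indicator_of_mem hx h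
  set M0 : ℝ := max M 1 with hM0def
  have hM0pos : (0:ℝ) < M0 := lt_of_lt_of_le one_pos (le_max_right _ _)
  have hh'le : ∀ x, h' x ≤ M0 := by
    intro x
    by_cases hx : x ∈ D
    · rw [hh'def, Set.indicator_of_mem hx]
      exact le_trans (le_abs_self _) (le_trans (hM x hx) (le_max_left _ _))
    · rw [hh'def, Set.indicator_of_notMem hx]; exact hM0pos.le
  set H : X → ℝ≥0∞ := fun x => ENNReal.ofReal (h' x) with hHdef
  have hHmeas : Measurable H := hh'meas.ennreal_ofReal
  have hHle : ∀ x, H x ≤ ENNReal.ofReal M0 := fun x => ENNReal.ofReal_le_ofReal (hh'le x)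
  -- the truncated kernel
  set E : Set (ℝ × X) := {p : ℝ × X | 0 ≤ p.1 ∧ p.2 ∈ D} with hEdef
  have hE : MeasurableSet E :=
    (measurable_fst measurableSet_Ici).inter (measurable_snd hD.measurableSet)
  set Qf : ℝ × X → Measure X := fun p => if p ∈ E then S.P p.1 p.2 else 0 with hQfdef
  have hQfmeas : Measurable Qf := by
    apply Measure.measurable_of_measurable_coe
    intro s hs
    have : (fun p : ℝ × X => Qf p s)
        = fun p : ℝ × X => if p ∈ E then S.P p.1 p.2 s else 0 := by
      funext p
      by_cases hp : p ∈ E <;> simp [hQfdef, hp]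
    rw [this]
    exact Measurable.ite hE (S.measurable_apply s hs) measurable_const
  set Q : ProbabilityTheory.Kernel (ℝ × X) X := ⟨Qf, hQfmeas⟩ with hQdef
  haveI : ProbabilityTheory.IsFiniteKernel Q := by
    refine ⟨⟨1, ENNReal.one_lt_top, fun p => ?_⟩⟩
    show Qf p Set.univ ≤ 1
    by_cases hp : p ∈ E
    · rw [hQfdef]; simp only [hp, if_true]
      exact S.subMarkov p.1 hp.1 p.2 hp.2
    · rw [hQfdef]; simp [hp]
  have hQapp : ∀ p : ℝ × X, Q p = Qf p := fun p => rfl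
  set w' : ℝ × X → ℝ≥0∞ := fun p => ∫⁻ z, H z ∂ (Q p) with hw'def
  have hw'meas : Measurable w' :=
    Measurable.lintegral_kernel_prod_right' (κ := Q) (hHmeas.comp measurable_snd)
  set w : ℝ → X → ℝ≥0∞ := fun t x => ∫⁻ z, H z ∂ (S.P t x) with hwdef
  have hww' : ∀ t : ℝ, 0 ≤ t → ∀ x ∈ D, w t x = w' (t, x) := by
    intro t ht x hx
    rw [hw'def]
    simp only [hQapp, hQfdef]
    rw [if_pos (show ((t,x) : ℝ × X) ∈ E from ⟨ht, hx⟩)]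
  -- a.e. membership in D
  have haeD : ∀ t : ℝ, 0 ≤ t → ∀ x ∈ D, ∀ᵐ z ∂ (S.P t x), z ∈ D := by
    intro t ht x hx
    rw [MeasureTheory.ae_iff]
    have : {z : X | ¬ z ∈ D} = Dᶜ := rfl
    rw [this]
    exact S.supported t ht x hx
  -- mass bound
  have hwle : ∀ t : ℝ, 0 ≤ t → ∀ x ∈ D,
      w t x ≤ ENNReal.ofReal (M0 * (C * Real.exp (-Λ * t))) := by
    intro t ht x hx
    have h1 : w t x ≤ ENNReal.ofReal M0 * (S.P t x) D := by
      rw [hwdef]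
      calc ∫⁻ z, H z ∂ (S.P t x) = ∫⁻ z in D, H z ∂ (S.P t x) := by
            rw [← lintegral_indicator hD.measurableSet]
            apply lintegral_congr_ae
            filter_upwards [haeD t ht x hx] with z hz
            rw [Set.indicator_of_mem hz]
        _ ≤ ∫⁻ _ in D, ENNReal.ofReal M0 ∂ (S.P t x) := by
            apply lintegral_mono
            intro z; exact hHle z
        _ = ENNReal.ofReal M0 * (S.P t x) D := by
            rw [setLIntegral_const, mul_comm]
    calc w t x ≤ ENNReal.ofReal M0 * (S.P t x) D := h1
      _ ≤ ENNReal.ofReal M0 * ENNReal.ofReal (C * Real.exp (-Λ * t)) := by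
          exact mul_le_mul_right (hdecay t ht x hx) _
      _ = ENNReal.ofReal (M0 * (C * Real.exp (-Λ * t))) := by
          rw [← ENNReal.ofReal_mul hM0pos.le]
  have hwlt : ∀ t : ℝ, 0 ≤ t → ∀ x ∈ D, w t x < ⊤ := by
    intro t ht x hx
    exact lt_of_le_of_lt (hwle t ht x hx) ENNReal.ofReal_lt_top
  -- semigroup property for lintegrals
  have hPmeas : ∀ t : ℝ, Measurable (fun y => S.P t y) := by
    intro t
    apply Measure.measurable_of_measurable_coe
    intro s hs
    exact (S.measurable_apply s hs).comp (measurable_const.prodMk measurable_id)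
  have hsemi : ∀ s : ℝ, 0 ≤ s → ∀ t : ℝ, 0 ≤ t → ∀ x ∈ D,
      w (s + t) x = ∫⁻ y, w t y ∂ (S.P s x) := by
    intro s hs t ht x hx
    have hbind : S.P (s + t) x = (S.P s x).bind (fun y => S.P t y) := by
      apply Measure.ext
      intro A hA
      rw [Measure.bind_apply hA (hPmeas t).aemeasurable]
      exact S.semigroup s hs t ht x hx A hA
    rw [hwdef]
    simp only
    rw [hbind, Measure.lintegral_bind (hPmeas t).aemeasurable hHmeas.aemeasurable]
  -- integrability of the dominating exponential
  have hexp_int : IntegrableOn (fun t : ℝ => M0 * (C * Real.exp (-Λ * t))) (Ici (0:ℝ)) := by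
    have h1 : IntegrableOn (fun t : ℝ => Real.exp (-Λ * t)) (Ioi (0:ℝ)) :=
      exp_neg_integrableOn_Ioi 0 hΛ
    have h2 : IntegrableOn (fun t : ℝ => M0 * (C * Real.exp (-Λ * t))) (Ioi (0:ℝ)) := by
      simpa [mul_assoc, IntegrableOn] using h1.const_mul (M0 * C)
    rwa [integrableOn_Ici_iff_integrableOn_Ioi]
  -- pointwise integral identity
  have hint_eq : ∀ t : ℝ, 0 ≤ t → ∀ y ∈ D, ∫ z, h z ∂ (S.P t y) = (w' (t, y)).toReal := by
    intro t ht y hy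
    have h1 : ∫ z, h z ∂ (S.P t y) = ∫ z, h' z ∂ (S.P t y) := by
      apply integral_congr_ae
      filter_upwards [haeD t ht y hy] with z hz
      exact (hh'eqD z hz).symm
    rw [h1, integral_eq_lintegral_of_nonneg_ae (Filter.Eventually.of_forall hh'nonneg)
      hh'meas.aestronglyMeasurable, ← hww' t ht y hy]
  set Wfun : X → ℝ≥0∞ := fun y => ∫⁻ t in Ici (0:ℝ), w' (t, y) with hWdef
  have hWfin : ∀ y ∈ D, Wfun y ≠ ⊤ := by
    intro y hy
    have hle : Wfun y ≤ ∫⁻ t in Ici (0:ℝ), ENNReal.ofReal (M0 * (C * Real.exp (-Λ * t))) := by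
      rw [hWdef]
      apply setLIntegral_mono' measurableSet_Ici
      intro t ht
      rw [← hww' t ht y hy]
      exact hwle t ht y hy
    exact ne_of_lt (lt_of_le_of_lt hle hexp_int.lintegral_lt_top)
  have hGW : ∀ y ∈ D, greenFn S.P h y = (Wfun y).toReal := by
    intro y hy
    have haem : AEMeasurable (fun t => w' (t, y)) (volume.restrict (Ici (0:ℝ))) :=
      (hw'meas.comp (measurable_id.prodMk measurable_const)).aemeasurable
    have hfin : ∀ᵐ t ∂ (volume.restrict (Ici (0:ℝ))), w' (t, y) < ⊤ := by
      filter_upwards [ae_restrict_mem measurableSet_Ici] with t ht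
      rw [← hww' t ht y hy]; exact hwlt t ht y hy
    rw [greenFn, ← integral_toReal haem hfin]
    apply setIntegral_congr_fun measurableSet_Ici
    intro t ht
    exact hint_eq t ht y hy
  have hgreen : ∀ y ∈ D, Wfun y = ENNReal.ofReal (1 / lam * h y) := by
    intro y hy
    have h3 := heig y hy
    rw [hGW y hy] at h3
    rw [← h3, ENNReal.ofReal_toReal (hWfin y hy)]
  -- the master identity
  have hstar : ∀ s : ℝ, 0 ≤ s → ∀ x ∈ D,
      w s x * ENNReal.ofReal (1 / lam) = ∫⁻ t in Ici s, w' (t, x) := by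
    intro s hs x hx
    haveI : IsFiniteMeasure (S.P s x) :=
      ⟨lt_of_le_of_lt (S.subMarkov s hs x hx) ENNReal.one_lt_top⟩
    have lhs1 : w s x * ENNReal.ofReal (1 / lam) = ∫⁻ z, Wfun z ∂ (S.P s x) := by
      rw [hwdef]
      simp only
      rw [← lintegral_mul_const _ hHmeas]
      apply lintegral_congr_ae
      filter_upwards [haeD s hs x hx] with z hz
      rw [hgreen z hz, hHdef]
      simp only
      rw [← ENNReal.ofReal_mul (hh'nonneg z), hh'eqD z hz, mul_comm]
    have hswap : ∫⁻ z, Wfun z ∂ (S.P s x)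
        = ∫⁻ t in Ici (0:ℝ), ∫⁻ z, w' (t, z) ∂ (S.P s x) := by
      rw [hWdef]
      exact lintegral_lintegral_swap (Measurable.aemeasurable (hw'meas.comp measurable_swap))
    have h4 : ∫⁻ t in Ici (0:ℝ), ∫⁻ z, w' (t, z) ∂ (S.P s x)
        = ∫⁻ t in Ici (0:ℝ), w' (s + t, x) := by
      apply setLIntegral_congr_fun measurableSet_Ici
      intro t ht
      have h1 : ∫⁻ z, w' (t, z) ∂ (S.P s x) = ∫⁻ z, w t z ∂ (S.P s x) := by
        apply lintegral_congr_ae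
        filter_upwards [haeD s hs x hx] with z hz
        exact (hww' t ht z hz).symm
      show ∫⁻ z, w' (t, z) ∂ (S.P s x) = w' (s + t, x)
      rw [h1, ← hsemi s hs t ht x hx, hww' (s + t) (add_nonneg hs ht) x hx]
    have h5 : ∫⁻ t in Ici s, w' (t, x) = ∫⁻ t in Ici (0:ℝ), w' (s + t, x) :=
      lintegral_Ici_shift (hw'meas.comp (measurable_id.prodMk measurable_const)) s
    rw [lhs1, hswap, h4, h5]
  -- the key pointwise formula
  have key : ∀ x ∈ D, ∀ t : ℝ, 0 ≤ t → (w t x).toReal = Real.exp (-(lam * t)) * h x := by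
    intro x hx
    set u : ℝ → ℝ := fun t => (w' (t, x)).toReal with hudef
    have humeas : Measurable u :=
      (hw'meas.comp (measurable_id.prodMk measurable_const)).ennreal_toReal
    have huw : ∀ t : ℝ, 0 ≤ t → u t = (w t x).toReal := by
      intro t ht; rw [hudef]; simp only; rw [← hww' t ht x hx]
    have hunonneg : ∀ t, 0 ≤ u t := fun t => ENNReal.toReal_nonneg
    have huneg : ∀ t : ℝ, t < 0 → u t = 0 := by
      intro t ht
      rw [hudef]
      simp only [hw'def, hQapp, hQfdef]
      rw [if_neg (fun hmem => absurd hmem.1 (not_le.mpr ht))]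
      simp
    have hubound : ∀ t : ℝ,
        ‖u t‖ ≤ (Ici (0:ℝ)).indicator (fun r => M0 * (C * Real.exp (-Λ * r))) t := by
      intro t
      rw [Real.norm_eq_abs, abs_of_nonneg (hunonneg t)]
      by_cases ht : 0 ≤ t
      · rw [Set.indicator_of_mem (mem_Ici.mpr ht), huw t ht]
        exact ENNReal.toReal_le_of_le_ofReal (by positivity) (hwle t ht x hx)
      · rw [Set.indicator_of_notMem (by simpa using ht), huneg t (not_le.mp ht)]
    have huint : Integrable u := by
      apply Integrable.mono' ((integrable_indicator_iff measurableSet_Ici).mpr hexp_int)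
        humeas.aestronglyMeasurable
      exact Filter.Eventually.of_forall hubound
    have hFu : ∀ s : ℝ, 0 ≤ s → u s * (1 / lam) = ∫ t in Ici s, u t := by
      intro s hs
      have h1 := hstar s hs x hx
      have h2 : (w s x * ENNReal.ofReal (1 / lam)).toReal = u s * (1 / lam) := by
        rw [ENNReal.toReal_mul, ENNReal.toReal_ofReal (by positivity), huw s hs]
      have haem2 : AEMeasurable (fun t : ℝ => w' (t, x)) (volume.restrict (Ici s)) :=
        (hw'meas.comp (measurable_id.prodMk measurable_const)).aemeasurable
      have hfin2 : ∀ᵐ t ∂ (volume.restrict (Ici s)), w' (t, x) < ⊤ := by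
        filter_upwards [ae_restrict_mem measurableSet_Ici] with t ht
        rw [← hww' t (le_trans hs ht) x hx]
        exact hwlt t (le_trans hs ht) x hx
      have h3 : (∫⁻ t in Ici s, w' (t, x)).toReal = ∫ t in Ici s, u t :=
        (integral_toReal haem2 hfin2).symm
      rw [← h2, ← h3, h1]
    set g : ℝ → ℝ := fun s => (∫ t in Ici (0:ℝ), u t) - ∫ t in (0:ℝ)..s, u t with hgdef
    have hgcont : Continuous g := continuous_const.sub
      (intervalIntegral.continuous_primitive (fun a b => huint.intervalIntegrable) 0)
    have hgF : ∀ s : ℝ, 0 ≤ s → g s = ∫ t in Ici s, u t := by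
      intro s hs
      have hdisj : Disjoint (Ico (0:ℝ) s) (Ici s) :=
        Set.disjoint_left.mpr (fun t ht hts => absurd (mem_Ici.mp hts) (not_le.mpr ht.2))
      have hsplit : ∫ t in Ici (0:ℝ), u t
          = (∫ t in Ico (0:ℝ) s, u t) + ∫ t in Ici s, u t := by
        rw [← setIntegral_union hdisj measurableSet_Ici huint.integrableOn huint.integrableOn,
          Ico_union_Ici_eq_Ici hs]
      have hival : ∫ t in (0:ℝ)..s, u t = ∫ t in Ico (0:ℝ) s, u t := by
        rw [intervalIntegral.integral_of_le hs]
        rw [← Measure.restrict_congr_set Ico_ae_eq_Ioc]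
      rw [hgdef]
      simp only
      rw [hival, hsplit]
      ring
    have hulamg : ∀ s : ℝ, 0 ≤ s → u s = lam * g s := by
      intro s hs
      have := hFu s hs
      rw [← hgF s hs] at this
      field_simp at this
      linarith
    have hgode : ∀ s : ℝ, 0 ≤ s → g s = g 0 - lam * ∫ t in (0:ℝ)..s, g t := by
      intro s hs
      have hg0 : g 0 = ∫ t in Ici (0:ℝ), u t := by
        rw [hgdef]; simp
      have hcong : ∫ t in (0:ℝ)..s, u t = ∫ t in (0:ℝ)..s, lam * g t := by
        apply intervalIntegral.integral_congr
        intro t ht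
        rw [Set.uIcc_of_le hs] at ht
        exact hulamg t ht.1
      have hgs : g s = (∫ t in Ici (0:ℝ), u t) - ∫ t in (0:ℝ)..s, u t := rfl
      rw [hgs, hcong, intervalIntegral.integral_const_mul, hg0]
    have hgexp := ode_exp_decay hgcont (fun s hs => hgode s hs)
    intro t ht
    have hg0val : g 0 = 1 / lam * h x := by
      have hgg : g 0 = greenFn S.P h x := by
        rw [hgF 0 le_rfl, greenFn]
        apply (setIntegral_congr_fun measurableSet_Ici ?_).symm
        intro r hr
        exact hint_eq r hr x hx
      rw [hgg]
      exact heig x hx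
    rw [← huw t ht, hulamg t ht, hgexp t ht, hg0val]
    field_simp
  refine ⟨?_, ?_⟩
  · intro t ht x hx
    rw [hint_eq t ht x hx, ← hww' t ht x hx, key x hx t ht, neg_mul]
  · rintro lam' μ ⟨hlam', hprob, hμDc, hQSD⟩
    haveI := hprob
    have hμD : μ D = 1 := by
      have h1 := measure_add_measure_compl (μ := μ) hD.measurableSet
      rw [hμDc, add_zero, measure_univ] at h1
      exact h1
    have haeDμ : ∀ᵐ x ∂μ, x ∈ D := by
      rw [MeasureTheory.ae_iff]
      exact hμDc
    have hbind : μ.bind (fun x => S.P 1 x)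
        = ENNReal.ofReal (Real.exp (-lam' * 1)) • μ := by
      apply Measure.ext
      intro A hA
      rw [Measure.bind_apply hA (hPmeas 1).aemeasurable]
      have hupper : ∫⁻ x, S.P 1 x A ∂μ = ∫⁻ x, S.P 1 x (A ∩ D) ∂μ := by
        apply lintegral_congr_ae
        filter_upwards [haeDμ] with x hx
        have h1 := measure_inter_add_diff (μ := S.P 1 x) A hD.measurableSet
        have h2 : S.P 1 x (A \ D) = 0 :=
          measure_mono_null (fun z hz => hz.2) (S.supported 1 zero_le_one x hx)
        rw [h2, add_zero] at h1
        exact h1.symm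
      have hμA : μ (A ∩ D) = μ A := by
        have h1 := measure_inter_add_diff (μ := μ) A hD.measurableSet
        have h2 : μ (A \ D) = 0 := measure_mono_null (fun z hz => hz.2) hμDc
        rw [h2, add_zero] at h1
        exact h1
      rw [hupper,
        hQSD 1 zero_le_one (A ∩ D) (hA.inter hD.measurableSet) inter_subset_right, hμA,
        Measure.smul_apply, smul_eq_mul]
    have e1 : ∫⁻ z, H z ∂ (μ.bind (fun x => S.P 1 x)) = ∫⁻ x, w 1 x ∂μ :=
      Measure.lintegral_bind (hPmeas 1).aemeasurable hHmeas.aemeasurable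
    have e2 : ∫⁻ x, w 1 x ∂μ
        = ENNReal.ofReal (Real.exp (-(lam * 1))) * ∫⁻ z, H z ∂μ := by
      rw [← lintegral_const_mul _ hHmeas]
      apply lintegral_congr_ae
      filter_upwards [haeDμ] with x hx
      have hfin := (hwlt 1 zero_le_one x hx).ne
      have hwx : w 1 x = ENNReal.ofReal (Real.exp (-(lam * 1)) * h x) := by
        rw [← ENNReal.ofReal_toReal hfin, key x hx 1 zero_le_one]
      rw [hwx, ENNReal.ofReal_mul (Real.exp_nonneg _), hHdef]
      simp only
      rw [hh'eqD x hx]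
    have e3 : ∫⁻ z, H z ∂ (ENNReal.ofReal (Real.exp (-lam' * 1)) • μ)
        = ENNReal.ofReal (Real.exp (-lam' * 1)) * ∫⁻ z, H z ∂μ :=
      lintegral_smul_measure _ _
    set I := ∫⁻ z, H z ∂μ with hIdef
    have hI0 : I ≠ 0 := by
      intro h0
      have hae := (lintegral_eq_zero_iff hHmeas).mp h0
      have hm0 : μ {x | ¬ H x = 0} = 0 := hae
      have hsub : D ⊆ {x | ¬ H x = 0} := by
        intro x hx
        simp only [Set.mem_setOf_eq, hHdef]
        rw [hh'eqD x hx]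
        exact ne_of_gt (ENNReal.ofReal_pos.mpr (hpos x hx))
      have := measure_mono_null (fun x hx => hx) (hm0)
      have h1 : μ D ≤ 0 := hm0 ▸ measure_mono hsub
      rw [hμD] at h1
      exact absurd h1 (by simp)
    have hItop : I ≠ ⊤ := by
      refine ne_of_lt (lt_of_le_of_lt (lintegral_mono hHle) ?_)
      rw [lintegral_const, measure_univ, mul_one]
      exact ENNReal.ofReal_lt_top
    have heq2 : ENNReal.ofReal (Real.exp (-(lam * 1))) * I
        = ENNReal.ofReal (Real.exp (-lam' * 1)) * I := by
      rw [← e2, ← e1, hbind, e3]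
    have hcast := congrArg (· * I⁻¹) heq2
    simp only [mul_assoc, ENNReal.mul_inv_cancel hI0 hItop, mul_one] at hcast
    have hexp := (ENNReal.ofReal_eq_ofReal_iff (Real.exp_nonneg _) (Real.exp_nonneg _)).mp hcast
    have := Real.exp_injective hexp
    linarith
end
end

section
/- Let M be a metric space and let (P_t)_{t≥0} be a family of sub-Markov kernels on M such that for every t ≥ 0 and every bounded continuous f : M → ℝ the map x ↦ ∫_M f(y) P_t(x,dy) is continuous. Let K ⊆ M be compact and U ⊆ M open, and suppose that for every x ∈ K there exists t ≥ 0 with P_t(x,U) > 0. Then there exist finitely many times t_1, …, t_n ≥ 0 and a constant δ > 0 such that for every x ∈ K, max_{1≤i≤n} P_{t_i}(x,U) ≥ δ. -/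
open MeasureTheory Filter Set Topology
open scoped ENNReal

open Metric in
lemma approx_open {M : Type*} [MetricSpace M] [MeasurableSpace M] [BorelSpace M]
    (ν : Measure M) [IsFiniteMeasure ν] {U : Set M} (hU : IsOpen U) (hν : 0 < ν U) :
    ∃ f : M → ℝ, Continuous f ∧ (∀ y, 0 ≤ f y) ∧ (∀ y, f y ≤ 1) ∧
      (∀ y, y ∉ U → f y = 0) ∧ 0 < ∫ y, f y ∂ν := by
  rcases eq_empty_or_nonempty Uᶜ with hc | hc
  · have hUuniv : U = univ := by rw [← compl_empty_iff]; exact hc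
    refine ⟨fun _ => 1, continuous_const, fun y => one_pos.le, fun y => le_refl 1,
      fun y hy => absurd (by simp [hUuniv]) hy, ?_⟩
    rw [integral_const, smul_eq_mul, mul_one]
    exact ENNReal.toReal_pos (by rw [← hUuniv]; exact hν.ne') (measure_ne_top ν _)
  · set A : ℕ → Set M := fun n => {y | (1 : ℝ) / (n + 1) ≤ infDist y Uᶜ} with hA
    have hmono : ∀ m n : ℕ, m ≤ n → A m ⊆ A n := by
      intro m n hmn y hy
      have hy' : (1:ℝ) / (m + 1) ≤ infDist y Uᶜ := hy
      have h2 : (1:ℝ) / (n + 1) ≤ 1 / (m + 1) := by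
        apply one_div_le_one_div_of_le
        · positivity
        · have : (m:ℝ) ≤ n := by exact_mod_cast hmn
          linarith
      exact le_trans h2 hy'
    have hUA : U ⊆ ⋃ n, A n := by
      intro y hy
      have hpos : 0 < infDist y Uᶜ :=
        (hU.isClosed_compl.notMem_iff_infDist_pos hc).1 (fun h => h hy)
      obtain ⟨n, hn⟩ := exists_nat_one_div_lt hpos
      exact mem_iUnion.2 ⟨n, hn.le⟩
    have hdir : Directed (· ⊆ ·) A := fun m n =>
      ⟨max m n, hmono m _ (le_max_left m n), hmono n _ (le_max_right m n)⟩
    have hmeas : ∀ n, MeasurableSet (A n) := fun n =>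
      measurableSet_le measurable_const (continuous_infDist_pt _).measurable
    have hsup : 0 < ⨆ n, ν (A n) := by
      rw [← Directed.measure_iUnion hdir]
      exact lt_of_lt_of_le hν (measure_mono hUA)
    obtain ⟨n, hn⟩ := lt_iSup_iff.1 hsup
    set f : M → ℝ := fun y => min 1 ((n + 1) * infDist y Uᶜ) with hf
    have hfc : Continuous f :=
      continuous_const.min (continuous_const.mul (continuous_infDist_pt _))
    have hf0 : ∀ y, 0 ≤ f y := fun y =>
      le_min one_pos.le (mul_nonneg (by positivity) infDist_nonneg)
    have hf1 : ∀ y, f y ≤ 1 := fun y => min_le_left _ _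
    have hfU : ∀ y, y ∉ U → f y = 0 := by
      intro y hy
      have : infDist y Uᶜ = 0 := infDist_zero_of_mem hy
      simp [hf, this]
    refine ⟨f, hfc, hf0, hf1, hfU, ?_⟩
    have hint : Integrable f ν := by
      refine (integrable_const (1:ℝ)).mono' hfc.aestronglyMeasurable ?_
      refine Filter.Eventually.of_forall fun y => ?_
      rw [Real.norm_eq_abs, abs_of_nonneg (hf0 y)]
      exact hf1 y
    have hind : Integrable ((A n).indicator (1 : M → ℝ)) ν :=
      ((integrable_const (1:ℝ)).congr (Filter.Eventually.of_forall fun y => rfl)).indicator (hmeas n)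
    have hle : ∀ y, (A n).indicator (1 : M → ℝ) y ≤ f y := by
      intro y
      by_cases hy : y ∈ A n
      · simp only [indicator_of_mem hy, Pi.one_apply]
        refine le_min le_rfl ?_
        have h1 : (1:ℝ)/(n+1) ≤ infDist y Uᶜ := hy
        calc (1:ℝ) = (n+1) * (1/(n+1)) := by field_simp
        _ ≤ (n+1) * infDist y Uᶜ := by
            apply mul_le_mul_of_nonneg_left h1
            positivity
      · rw [indicator_of_notMem hy]
        exact hf0 y
    calc (0:ℝ) < (ν (A n)).toReal := ENNReal.toReal_pos hn.ne' (measure_ne_top ν _)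
      _ = ∫ y, (A n).indicator (1 : M → ℝ) y ∂ν := (MeasureTheory.integral_indicator_one (hmeas n)).symm
      _ ≤ _ := integral_mono hind hint hle

/-- for a family `(P t)` of Feller sub-Markov kernels on a metric space `M`, if
`K` is compact, `U` is open, and from every `x ∈ K` some `P t (x, U) > 0` with `t ≥ 0`, then
there are finitely many times `t₁, …, tₙ ≥ 0` and `δ > 0` such that every `x ∈ K` satisfies
`P tᵢ (x, U) ≥ δ` for some `i`. -/
theorem uniform_accessibility_of_compact
    {M : Type*} [MetricSpace M] [MeasurableSpace M] [BorelSpace M]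
    (P : ℝ → M → Measure M)
    (hsub : ∀ t : ℝ, 0 ≤ t → ∀ x, P t x Set.univ ≤ 1)
    (hFeller : ∀ t : ℝ, 0 ≤ t → ∀ f : M → ℝ, Continuous f → (∃ Mb : ℝ, ∀ x, |f x| ≤ Mb) →
      Continuous fun x => ∫ y, f y ∂ (P t x))
    (K U : Set M) (hK : IsCompact K) (hU : IsOpen U)
    (hacc : ∀ x ∈ K, ∃ t : ℝ, 0 ≤ t ∧ 0 < P t x U) :
    ∃ n : ℕ, ∃ ts : Fin n → ℝ, (∀ i, 0 ≤ ts i) ∧ ∃ δ : ℝ, 0 < δ ∧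
      ∀ x ∈ K, ∃ i : Fin n, ENNReal.ofReal δ ≤ P (ts i) x U := by
  have claim : ∀ x ∈ K, ∃ t : ℝ, 0 ≤ t ∧ ∃ r : ℝ, 0 < r ∧ ∃ V : Set M,
      IsOpen V ∧ x ∈ V ∧ ∀ y ∈ V, ENNReal.ofReal r ≤ P t y U := by
    intro x hx
    obtain ⟨t, ht, hPt⟩ := hacc x hx
    have hfin : ∀ z : M, IsFiniteMeasure (P t z) := fun z =>
      ⟨lt_of_le_of_lt (hsub t ht z) ENNReal.one_lt_top⟩
    haveI := hfin x
    obtain ⟨f, hfc, hf0, hf1, hfU, hfpos⟩ := approx_open (P t x) hU hPt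
    set r := (∫ y, f y ∂ P t x) / 2 with hr
    have hrpos : 0 < r := by positivity
    refine ⟨t, ht, r, hrpos, (fun z => ∫ y, f y ∂ P t z) ⁻¹' Ioi r, ?_, ?_, ?_⟩
    · refine (hFeller t ht f hfc ⟨1, fun z => ?_⟩).isOpen_preimage _ isOpen_Ioi
      rw [abs_of_nonneg (hf0 z)]; exact hf1 z
    · show r < ∫ y, f y ∂ P t x
      linarith
    · intro y hy
      haveI := hfin y
      have hintf : Integrable f (P t y) := by
        refine (integrable_const (1:ℝ)).mono' hfc.aestronglyMeasurable ?_
        refine Filter.Eventually.of_forall fun z => ?_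
        rw [Real.norm_eq_abs, abs_of_nonneg (hf0 z)]
        exact hf1 z
      have hind : Integrable (U.indicator (1 : M → ℝ)) (P t y) :=
        ((integrable_const (1:ℝ)).congr
          (Filter.Eventually.of_forall fun z => rfl)).indicator hU.measurableSet
      have h1 : ∫ z, f z ∂ P t y ≤ (P t y U).toReal := by
        calc ∫ z, f z ∂ P t y ≤ ∫ z, U.indicator (1 : M → ℝ) z ∂ P t y := by
              refine integral_mono hintf hind fun z => ?_
              by_cases hz : z ∈ U
              · simp only [indicator_of_mem hz, Pi.one_apply]; exact hf1 z
              · rw [indicator_of_notMem hz, hfU z hz]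
          _ = (P t y U).toReal := MeasureTheory.integral_indicator_one hU.measurableSet
      have hy' : r ≤ ∫ z, f z ∂ P t y := le_of_lt hy
      calc ENNReal.ofReal r ≤ ENNReal.ofReal ((P t y U).toReal) :=
            ENNReal.ofReal_le_ofReal (le_trans hy' h1)
        _ = P t y U := ENNReal.ofReal_toReal (measure_ne_top _ _)
  choose tfun htnn rfun hrpos V hVopen hxV hV using claim
  obtain ⟨s, hs⟩ := hK.elim_nhds_subcover' (fun x hx => V x hx)
    (fun x hx => (hVopen x hx).mem_nhds (hxV x hx))
  rcases s.eq_empty_or_nonempty with hse | hse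
  · refine ⟨0, Fin.elim0, fun i => i.elim0, 1, one_pos, fun x hx => ?_⟩
    exfalso
    have := hs hx
    simp [hse] at this
  · set e := s.equivFin with he
    refine ⟨s.card, fun i => tfun ((e.symm i : {z : K // z ∈ s}) : K).1
        ((e.symm i : {z : K // z ∈ s}) : K).2,
      fun i => htnn _ _, s.inf' hse (fun z => rfun (z : K).1 (z : K).2), ?_, ?_⟩
    · exact (Finset.lt_inf'_iff hse).2 fun z _ => hrpos _ _
    · intro x hx
      have := hs hx
      rw [mem_iUnion₂] at this
      obtain ⟨z, hz, hxz⟩ := this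
      refine ⟨e ⟨z, hz⟩, ?_⟩
      simp only [Equiv.symm_apply_apply]
      refine le_trans (ENNReal.ofReal_le_ofReal ?_) (hV z.1 z.2 x hxz)
      exact Finset.inf'_le _ hz
end

section
/- Let D ⊆ ℝⁿ be a bounded open set with closure K, and let S⁰, S¹, …, Sᵐ : ℝⁿ → ℝⁿ be locally Lipschitz vector fields. Suppose there exist a point x̃ ∈ ℝⁿ∖K and δ > 0 such that Σ_{j=1}^m ⟨Sʲ(x), x − x̃⟩² ≥ δ‖x − x̃‖² for all x ∈ D. Then for every x ∈ K there exist T ≥ 0, a continuous control u : [0,T] → ℝᵐ, and a C¹ path y : [0,T] → ℝⁿ with y(0) = x, y'(t) = S⁰(y(t)) + Σ_{j=1}^m uʲ(t) Sʲ(y(t)) for all t ∈ [0,T], and y(T) ∉ K. -/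
open Set Metric

set_option maxHeartbeats 1000000

section LipAux

variable {E : Type*} [NormedAddCommGroup E] [NormedSpace ℝ E]
variable {F : Type*} [NormedAddCommGroup F] [NormedSpace ℝ F]

/-- Lipschitz-and-bounded on a set, with real constants. -/
def LBOn (s : Set E) (f : E → F) : Prop :=
  ∃ L M : ℝ, 0 ≤ L ∧ 0 ≤ M ∧ (∀ z ∈ s, ‖f z‖ ≤ M) ∧
    ∀ z ∈ s, ∀ w ∈ s, ‖f z - f w‖ ≤ L * ‖z - w‖

theorem LBOn.add {s : Set E} {f g : E → F} (hf : LBOn s f) (hg : LBOn s g) :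
    LBOn s (fun z => f z + g z) := by
  obtain ⟨Lf, Mf, hLf, hMf, hbf, hlf⟩ := hf
  obtain ⟨Lg, Mg, hLg, hMg, hbg, hlg⟩ := hg
  refine ⟨Lf + Lg, Mf + Mg, by positivity, by positivity, ?_, ?_⟩
  · intro z hz
    calc ‖f z + g z‖ ≤ ‖f z‖ + ‖g z‖ := norm_add_le _ _
    _ ≤ Mf + Mg := add_le_add (hbf z hz) (hbg z hz)
  · intro z hz w hw
    have h1 := hlf z hz w hw
    have h2 := hlg z hz w hw
    calc ‖f z + g z - (f w + g w)‖ = ‖(f z - f w) + (g z - g w)‖ := by abel_nf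
    _ ≤ ‖f z - f w‖ + ‖g z - g w‖ := norm_add_le _ _
    _ ≤ (Lf + Lg) * ‖z - w‖ := by rw [add_mul]; exact add_le_add h1 h2

theorem LBOn.smul {s : Set E} {f : E → ℝ} {g : E → F} (hf : LBOn s f) (hg : LBOn s g) :
    LBOn s (fun z => f z • g z) := by
  obtain ⟨Lf, Mf, hLf, hMf, hbf, hlf⟩ := hf
  obtain ⟨Lg, Mg, hLg, hMg, hbg, hlg⟩ := hg
  refine ⟨Lf * Mg + Mf * Lg, Mf * Mg, by positivity, by positivity, ?_, ?_⟩
  · intro z hz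
    rw [norm_smul]
    exact mul_le_mul (hbf z hz) (hbg z hz) (norm_nonneg _) hMf
  · intro z hz w hw
    have hkey : f z • g z - f w • g w = (f z - f w) • g z + f w • (g z - g w) := by
      rw [sub_smul, smul_sub]; abel
    rw [hkey]
    calc ‖(f z - f w) • g z + f w • (g z - g w)‖
        ≤ ‖(f z - f w) • g z‖ + ‖f w • (g z - g w)‖ := norm_add_le _ _
    _ = ‖f z - f w‖ * ‖g z‖ + ‖f w‖ * ‖g z - g w‖ := by rw [norm_smul, norm_smul]
    _ ≤ (Lf * ‖z - w‖) * Mg + Mf * (Lg * ‖z - w‖) := by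
        refine add_le_add ?_ ?_
        · exact mul_le_mul (hlf z hz w hw) (hbg z hz) (norm_nonneg _)
            ((norm_nonneg _).trans (hlf z hz w hw))
        · exact mul_le_mul (hbf w hw) (hlg z hz w hw) (norm_nonneg _) hMf
    _ = (Lf * Mg + Mf * Lg) * ‖z - w‖ := by ring

theorem LBOn.const_mul {s : Set E} {f : E → ℝ} (hf : LBOn s f) (c : ℝ) :
    LBOn s (fun z => c * f z) := by
  obtain ⟨Lf, Mf, hLf, hMf, hbf, hlf⟩ := hf
  refine ⟨|c| * Lf, |c| * Mf, by positivity, by positivity, ?_, ?_⟩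
  · intro z hz
    rw [norm_mul]
    exact mul_le_mul_of_nonneg_left (hbf z hz) (abs_nonneg c)
  · intro z hz w hw
    rw [← mul_sub, norm_mul, mul_assoc]
    exact mul_le_mul_of_nonneg_left (hlf z hz w hw) (abs_nonneg c)

theorem LBOn.inner' {G' : Type*} [NormedAddCommGroup G'] [InnerProductSpace ℝ G']
    {s : Set E} {f g : E → G'} (hf : LBOn s f) (hg : LBOn s g) :
    LBOn s (fun z => (inner ℝ (f z) (g z) : ℝ)) := by
  obtain ⟨Lf, Mf, hLf, hMf, hbf, hlf⟩ := hf
  obtain ⟨Lg, Mg, hLg, hMg, hbg, hlg⟩ := hg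
  refine ⟨Lf * Mg + Mf * Lg, Mf * Mg, by positivity, by positivity, ?_, ?_⟩
  · intro z hz
    rw [Real.norm_eq_abs]
    calc |(inner ℝ (f z) (g z) : ℝ)| ≤ ‖f z‖ * ‖g z‖ := abs_real_inner_le_norm _ _
    _ ≤ Mf * Mg := mul_le_mul (hbf z hz) (hbg z hz) (norm_nonneg _) hMf
  · intro z hz w hw
    have hkey : (inner ℝ (f z) (g z) : ℝ) - inner ℝ (f w) (g w)
        = (inner ℝ (f z - f w) (g z) : ℝ) + inner ℝ (f w) (g z - g w) := by
      rw [inner_sub_left, inner_sub_right]; ring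
    rw [Real.norm_eq_abs, hkey]
    calc |(inner ℝ (f z - f w) (g z) : ℝ) + inner ℝ (f w) (g z - g w)|
        ≤ |(inner ℝ (f z - f w) (g z) : ℝ)| + |(inner ℝ (f w) (g z - g w) : ℝ)| := abs_add_le _ _
    _ ≤ ‖f z - f w‖ * ‖g z‖ + ‖f w‖ * ‖g z - g w‖ :=
        add_le_add (abs_real_inner_le_norm _ _) (abs_real_inner_le_norm _ _)
    _ ≤ (Lf * ‖z - w‖) * Mg + Mf * (Lg * ‖z - w‖) := by
        refine add_le_add ?_ ?_
        · exact mul_le_mul (hlf z hz w hw) (hbg z hz) (norm_nonneg _)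
            ((norm_nonneg _).trans (hlf z hz w hw))
        · exact mul_le_mul (hbf w hw) (hlg z hz w hw) (norm_nonneg _) hMf
    _ = (Lf * Mg + Mf * Lg) * ‖z - w‖ := by ring

theorem LBOn.sum {ι : Type*} {s : Set E} {u : Finset ι} {f : ι → E → F}
    (h : ∀ j ∈ u, LBOn s (f j)) : LBOn s (fun z => ∑ j ∈ u, f j z) := by
  classical
  induction u using Finset.induction_on with
  | empty => exact ⟨0, 0, le_rfl, le_rfl, by simp, by simp⟩
  | @insert a u' ha ih =>
    have h1 : LBOn s (fun z => f a z + ∑ j ∈ u', f j z) :=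
      (h a (Finset.mem_insert_self a u')).add (ih fun j hj => h j (Finset.mem_insert_of_mem hj))
    have : (fun z => ∑ j ∈ insert a u', f j z) = fun z => f a z + ∑ j ∈ u', f j z := by
      funext z; rw [Finset.sum_insert ha]
    rw [this]
    exact h1

theorem locLip_bound_on_compact {f : E → F} (hf : LocallyLipschitz f) {s : Set E}
    (hs : IsCompact s) :
    ∃ L : ℝ, 0 ≤ L ∧ ∀ z ∈ s, ∀ w ∈ s, ‖f z - f w‖ ≤ L * ‖z - w‖ := by
  rcases s.eq_empty_or_nonempty with rfl | hne
  · exact ⟨0, le_rfl, by simp⟩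
  have hfc := hf.continuous
  choose K t ht hlip using hf
  choose r hr hball using fun a => Metric.mem_nhds_iff.mp (ht a)
  obtain ⟨I, hIs, hIcov⟩ := hs.elim_nhds_subcover (fun a => ball a (r a / 2))
    (fun a _ => ball_mem_nhds a (half_pos (hr a)))
  obtain ⟨M, hM⟩ := Metric.isBounded_iff.mp (hs.image hfc).isBounded
  rcases I.eq_empty_or_nonempty with rfl | hI
  · exfalso
    obtain ⟨a, ha⟩ := hne
    simpa using hIcov ha
  have hM0 : 0 ≤ M := by
    obtain ⟨a, ha⟩ := hne
    have := hM (mem_image_of_mem f ha) (mem_image_of_mem f ha)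
    simpa using this
  set r0 : ℝ := I.inf' hI (fun a => r a / 2) with hr0def
  have hr0 : 0 < r0 := by
    rw [hr0def, Finset.lt_inf'_iff]
    intro a _
    have := hr a
    positivity
  set L1 : ℝ := I.sup' hI (fun a => (K a : ℝ)) with hL1def
  have hL10 : 0 ≤ L1 := by
    obtain ⟨a, ha⟩ := hI
    exact le_trans (K a).coe_nonneg (Finset.le_sup' (fun a => (K a : ℝ)) ha)
  refine ⟨max L1 (M / r0), le_trans hL10 (le_max_left _ _), ?_⟩
  intro z hz w hw
  rcases lt_or_ge (dist z w) r0 with hlt | hge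
  · obtain ⟨a, haI, haz⟩ : ∃ a ∈ I, z ∈ ball a (r a / 2) := by
      have := hIcov hz
      simpa using this
    have hz' : z ∈ t a := hball a (mem_ball.mpr (lt_of_lt_of_le (mem_ball.mp haz) (by linarith [hr a])))
    have hw' : w ∈ t a := by
      apply hball a
      rw [mem_ball]
      have h1 : dist w a ≤ dist w z + dist z a := dist_triangle _ _ _
      have h2 : dist z a < r a / 2 := mem_ball.mp haz
      have h3 : r0 ≤ r a / 2 := by
        rw [hr0def]
        exact Finset.inf'_le _ haI
      rw [dist_comm w z] at h1
      linarith
    have hlipza := (lipschitzOnWith_iff_dist_le_mul.mp (hlip a)) z hz' w hw'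
    rw [dist_eq_norm, dist_eq_norm] at hlipza
    calc ‖f z - f w‖ ≤ (K a : ℝ) * ‖z - w‖ := hlipza
    _ ≤ max L1 (M / r0) * ‖z - w‖ := by
        apply mul_le_mul_of_nonneg_right _ (norm_nonneg _)
        exact le_trans (Finset.le_sup' (fun a => (K a : ℝ)) haI) (le_max_left _ _)
  · have h1 : ‖f z - f w‖ ≤ M := by
      rw [← dist_eq_norm]
      exact hM (mem_image_of_mem f hz) (mem_image_of_mem f hw)
    calc ‖f z - f w‖ ≤ M := h1
    _ = (M / r0) * r0 := by field_simp
    _ ≤ (M / r0) * ‖z - w‖ := by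
        apply mul_le_mul_of_nonneg_left _ (by positivity)
        rw [← dist_eq_norm]
        exact hge
    _ ≤ max L1 (M / r0) * ‖z - w‖ :=
        mul_le_mul_of_nonneg_right (le_max_right _ _) (norm_nonneg _)

theorem lbOn_of_locallyLipschitz {f : E → F} (hf : LocallyLipschitz f) {s : Set E}
    (hs : IsCompact s) : LBOn s f := by
  obtain ⟨L, hL0, hL⟩ := locLip_bound_on_compact hf hs
  obtain ⟨M, hM⟩ := hs.exists_bound_of_continuousOn hf.continuous.continuousOn
  exact ⟨L, max M 0, hL0, le_max_right _ _,
    fun z hz => (hM z hz).trans (le_max_left _ _), hL⟩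

theorem abs_min_sub_min_le (c a b : ℝ) : |min c a - min c b| ≤ |a - b| := by
  rcases le_total a c with h1 | h1 <;> rcases le_total b c with h2 | h2 <;>
    [rw [min_eq_right h1, min_eq_right h2];
     rw [min_eq_right h1, min_eq_left h2];
     rw [min_eq_left h1, min_eq_right h2];
     rw [min_eq_left h1, min_eq_left h2]] <;>
    rcases abs_cases (a - b) with h | h <;> rw [abs_le] <;> constructor <;> linarith [h.1, h.2]

end LipAux

/-- Pinsky-type criterion: if the bounded open set `D ⊆ ℝⁿ` with closure `K`
admits a point `x̃ ∉ K` and `δ > 0` with `∑_j ⟪Sʲ(x), x − x̃⟫² ≥ δ‖x − x̃‖²` on `D`, then from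
every `x ∈ K` the control system `y' = S⁰(y) + ∑_j uʲ Sʲ(y)` admits a trajectory leaving `K`. -/
theorem control_exits_closure_of_pinsky_condition
    {n m : ℕ}
    (D : Set (EuclideanSpace ℝ (Fin n))) (hD : IsOpen D) (hDb : Bornology.IsBounded D)
    (S0 : EuclideanSpace ℝ (Fin n) → EuclideanSpace ℝ (Fin n))
    (S : Fin m → EuclideanSpace ℝ (Fin n) → EuclideanSpace ℝ (Fin n))
    (hS0 : LocallyLipschitz S0) (hS : ∀ j, LocallyLipschitz (S j))
    (xt : EuclideanSpace ℝ (Fin n)) (hxt : xt ∉ closure D)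
    (δ : ℝ) (hδ : 0 < δ)
    (hpinsky : ∀ x ∈ D, δ * ‖x - xt‖ ^ 2 ≤ ∑ j : Fin m, (inner ℝ (S j x) (x - xt) : ℝ) ^ 2) :
    ∀ x ∈ closure D, ∃ T : ℝ, 0 ≤ T ∧
      ∃ u : ℝ → Fin m → ℝ, ContinuousOn u (Set.Icc 0 T) ∧
      ∃ y : ℝ → EuclideanSpace ℝ (Fin n), y 0 = x ∧
        (∀ t ∈ Set.Icc (0 : ℝ) T,
          HasDerivAt y (S0 (y t) + ∑ j : Fin m, u t j • S j (y t)) t) ∧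
        y T ∉ closure D := by
  classical
  intro x hx
  set Kc := closure D with hKcdef
  have hKcl : IsClosed Kc := isClosed_closure
  have hKb : Bornology.IsBounded Kc := hDb.closure
  have hKcomp : IsCompact Kc := hDb.isCompact_closure
  have hKne : Kc.Nonempty := ⟨x, hx⟩
  set d := infDist xt Kc with hddef
  have hd : 0 < d := (hKcl.notMem_iff_infDist_pos hKne).mp hxt
  obtain ⟨R, hRK⟩ := hKb.subset_closedBall xt
  have hzR : ∀ z ∈ Kc, ‖z - xt‖ ≤ R := by
    intro z hz
    rw [← dist_eq_norm]
    exact mem_closedBall.mp (hRK hz)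
  have hzd : ∀ z ∈ Kc, d ≤ ‖z - xt‖ := by
    intro z hz
    rw [← dist_eq_norm, dist_comm]
    exact infDist_le_dist_of_mem hz
  have hdR : d ≤ R := by
    obtain ⟨z, hz⟩ := hKne
    exact le_trans (hzd z hz) (hzR z hz)
  have hR0 : 0 < R := lt_of_lt_of_le hd hdR
  -- Pinsky inequality on the closure
  have hpinskyK : ∀ z ∈ Kc, δ * ‖z - xt‖ ^ 2 ≤ ∑ j : Fin m, (inner ℝ (S j z) (z - xt) : ℝ) ^ 2 := by
    have hcl : IsClosed {z : EuclideanSpace ℝ (Fin n) |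
        δ * ‖z - xt‖ ^ 2 ≤ ∑ j : Fin m, (inner ℝ (S j z) (z - xt) : ℝ) ^ 2} := by
      apply isClosed_le
      · exact continuous_const.mul (((continuous_id.sub continuous_const).norm).pow 2)
      · exact continuous_finset_sum _ fun j _ =>
          (Continuous.inner (hS j).continuous (continuous_id.sub continuous_const)).pow 2
    exact fun z hz => closure_minimal (fun w hw => hpinsky w hw) hcl hz
  -- constants
  obtain ⟨C0', hC0'⟩ := hKcomp.exists_bound_of_continuousOn hS0.continuous.continuousOn
  set C0 := max C0' 0 with hC0def
  have hC0 : ∀ z ∈ Kc, ‖S0 z‖ ≤ C0 := fun z hz => (hC0' z hz).trans (le_max_left _ _)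
  have hC0nn : 0 ≤ C0 := le_max_right _ _
  have hδd : 0 < δ * d ^ 2 := by positivity
  set lam := (C0 * R + 1) / (δ * d ^ 2) with hlamdef
  have hlam0 : 0 ≤ lam := div_nonneg (by positivity) hδd.le
  have hlamδ : lam * (δ * d ^ 2) = C0 * R + 1 := div_mul_cancel₀ _ hδd.ne'
  -- the vector fields
  set w : Fin m → EuclideanSpace ℝ (Fin n) → ℝ :=
    fun j z => (inner ℝ (S j z) (z - xt) : ℝ) with hwdef
  set G : EuclideanSpace ℝ (Fin n) → EuclideanSpace ℝ (Fin n) :=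
    fun z => S0 z + ∑ j : Fin m, (lam * w j z) • S j z with hGdef
  set chi : EuclideanSpace ℝ (Fin n) → ℝ :=
    fun z => max 0 (min 1 (2 - infDist z Kc)) with hchidef
  set V : EuclideanSpace ℝ (Fin n) → EuclideanSpace ℝ (Fin n) :=
    fun z => chi z • G z with hVdef
  have hchi01 : ∀ z, 0 ≤ chi z ∧ chi z ≤ 1 := fun z =>
    ⟨le_max_left _ _, max_le (by norm_num) (min_le_left _ _)⟩
  have hchi1 : ∀ z, infDist z Kc ≤ 1 → chi z = 1 := by
    intro z hz
    have h1 : (1:ℝ) ≤ 2 - infDist z Kc := by linarith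
    rw [hchidef]
    simp only
    rw [min_eq_left h1, max_eq_right zero_le_one]
  have hchi0 : ∀ z, 2 ≤ infDist z Kc → chi z = 0 := by
    intro z hz
    have h1 : min 1 (2 - infDist z Kc) ≤ 0 := le_trans (min_le_right _ _) (by linarith)
    rw [hchidef]
    simp only
    rw [max_eq_left h1]
  have hchilip : ∀ z z', |chi z - chi z'| ≤ ‖z - z'‖ := by
    intro z z'
    have h1 : |chi z - chi z'| ≤ |min 1 (2 - infDist z Kc) - min 1 (2 - infDist z' Kc)| := by
      rw [hchidef]
      simp only
      rw [max_comm 0 (min 1 (2 - infDist z Kc)), max_comm 0 (min 1 (2 - infDist z' Kc))]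
      exact abs_max_sub_max_le_abs _ _ _
    have h2 : |min 1 (2 - infDist z Kc) - min 1 (2 - infDist z' Kc)|
        ≤ |(2 - infDist z Kc) - (2 - infDist z' Kc)| := abs_min_sub_min_le _ _ _
    have h3 : |(2 - infDist z Kc) - (2 - infDist z' Kc)| = |infDist z' Kc - infDist z Kc| := by
      congr 1; ring
    have h4 : |infDist z' Kc - infDist z Kc| ≤ ‖z - z'‖ := by
      have := (lipschitz_infDist_pt (s := Kc)).dist_le_mul z' z
      rw [Real.dist_eq] at this
      rw [← dist_eq_norm, dist_comm]
      simpa using this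
    calc |chi z - chi z'| ≤ _ := h1
    _ ≤ _ := h2
    _ = _ := h3
    _ ≤ _ := h4
  have hchicont : Continuous chi := by
    rw [hchidef]
    exact continuous_const.max (continuous_const.min
      (continuous_const.sub (continuous_infDist_pt Kc)))
  have hGcont : Continuous G := by
    rw [hGdef]
    apply hS0.continuous.add
    apply continuous_finset_sum
    intro j _
    exact (continuous_const.mul
      (Continuous.inner (𝕜 := ℝ) (hS j).continuous (continuous_id.sub continuous_const))).smul
      (hS j).continuous
  -- time horizon and global bound
  set T0 := R ^ 2 with hT0def
  have hT0pos : 0 < T0 := by positivity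
  set M2 : Set (EuclideanSpace ℝ (Fin n)) := {z | infDist z Kc ≤ 2} with hM2def
  have hM2comp : IsCompact M2 := by
    apply Metric.isCompact_of_isClosed_isBounded
    · exact isClosed_le (continuous_infDist_pt Kc) continuous_const
    · apply (isBounded_closedBall (x := xt) (r := R + 3)).subset
      intro z hz
      obtain ⟨v, hv, hdv⟩ := (infDist_lt_iff hKne).mp (lt_of_le_of_lt hz (by norm_num : (2:ℝ) < 3))
      rw [mem_closedBall]
      calc dist z xt ≤ dist z v + dist v xt := dist_triangle _ _ _
      _ ≤ 3 + R := add_le_add hdv.le (mem_closedBall.mp (hRK hv))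
      _ = R + 3 := by ring
  obtain ⟨CG', hCG'⟩ := hM2comp.exists_bound_of_continuousOn hGcont.continuousOn
  set CG := max CG' 0 with hCGdef
  have hCGnn : 0 ≤ CG := le_max_right _ _
  have hVbound : ∀ z, ‖V z‖ ≤ CG := by
    intro z
    rcases le_total (infDist z Kc) 2 with h | h
    · have h1 : ‖V z‖ = chi z * ‖G z‖ := by
        rw [hVdef]
        simp only [norm_smul, Real.norm_eq_abs, abs_of_nonneg (hchi01 z).1]
      rw [h1]
      calc chi z * ‖G z‖ ≤ 1 * CG :=
        mul_le_mul (hchi01 z).2 ((hCG' z h).trans (le_max_left _ _)) (norm_nonneg _) zero_le_one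
      _ = CG := one_mul _
    · have h1 : V z = 0 := by rw [hVdef]; simp only [hchi0 z h, zero_smul]
      rw [h1, norm_zero]; exact hCGnn
  -- Lipschitz bound on the relevant ball
  set rB := CG * (T0 + 1) with hrBdef
  have hrB0 : 0 ≤ rB := by positivity
  set B := closedBall x rB with hBdef
  have hBcomp : IsCompact B := isCompact_closedBall x rB
  have hLBS0 : LBOn B S0 := lbOn_of_locallyLipschitz hS0 hBcomp
  have hLBSj : ∀ j, LBOn B (S j) := fun j => lbOn_of_locallyLipschitz (hS j) hBcomp
  have hLBid : LBOn B (fun z => z - xt) := by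
    refine ⟨1, rB + ‖x - xt‖, zero_le_one, by positivity, ?_, ?_⟩
    · intro z hz
      have h1 : ‖z - xt‖ ≤ ‖z - x‖ + ‖x - xt‖ := by
        calc ‖z - xt‖ = ‖(z - x) + (x - xt)‖ := by abel_nf
        _ ≤ _ := norm_add_le _ _
      have h2 : ‖z - x‖ ≤ rB := by rw [← dist_eq_norm]; exact mem_closedBall.mp hz
      linarith
    · intro z hz z' hz'
      have : z - xt - (z' - xt) = z - z' := by abel
      rw [this, one_mul]
  have hLBchi : LBOn B chi := by
    refine ⟨1, 1, zero_le_one, zero_le_one, ?_, ?_⟩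
    · intro z hz
      rw [Real.norm_eq_abs, abs_of_nonneg (hchi01 z).1]
      exact (hchi01 z).2
    · intro z hz z' hz'
      rw [Real.norm_eq_abs, one_mul]
      exact hchilip z z'
  have hLBG : LBOn B G := by
    rw [hGdef]
    exact hLBS0.add (LBOn.sum (fun j _ =>
      ((((hLBSj j).inner' hLBid).const_mul lam).smul (hLBSj j))))
  have hLBV : LBOn B V := by
    rw [hVdef]
    exact hLBchi.smul hLBG
  obtain ⟨LV, MV, hLV0, _, _, hLVlip⟩ := hLBV
  have hlipV : LipschitzOnWith LV.toNNReal V B := by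
    rw [lipschitzOnWith_iff_dist_le_mul]
    intro z hz z' hz'
    rw [dist_eq_norm, dist_eq_norm, Real.coe_toNNReal _ hLV0]
    exact hLVlip z hz z' hz'
  -- Picard-Lindelöf
  have hPL : IsPicardLindelof (fun _ z => V z) (tmin := -1) (tmax := T0 + 1)
      ⟨0, ⟨by norm_num, by linarith⟩⟩ x rB.toNNReal 0 CG.toNNReal LV.toNNReal :=
    { lipschitzOnWith := fun t _ => by rw [Real.coe_toNNReal _ hrB0]; exact hlipV
      continuousOn := fun z _ => continuousOn_const
      norm_le := fun t _ z _ => by rw [Real.coe_toNNReal _ hCGnn]; exact hVbound z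
      mul_max_le := by
        simp only [NNReal.coe_zero, sub_zero, zero_sub, neg_neg, Real.coe_toNNReal _ hCGnn,
          Real.coe_toNNReal _ hrB0]
        rw [max_eq_left (by linarith : (1:ℝ) ≤ T0 + 1)] }
  obtain ⟨f, hf0, hfd⟩ := hPL.exists_eq_forall_mem_Icc_hasDerivWithinAt₀
  replace hf0 : f 0 = x := hf0
  have hfD : ∀ t ∈ Icc (0:ℝ) T0, HasDerivAt f (V (f t)) t := by
    intro t ht
    exact (hfd t ⟨by linarith [ht.1], by linarith [ht.2]⟩).hasDerivAt
      (Icc_mem_nhds (by linarith [ht.1]) (by linarith [ht.2]))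
  have hfc : ∀ t ∈ Icc (0:ℝ) T0, ContinuousAt f t := fun t ht => (hfD t ht).continuousAt
  -- key inner-product estimate on Kc
  have hkey : ∀ z ∈ Kc, (1:ℝ) ≤ inner ℝ (V z) (z - xt) := by
    intro z hz
    have hchiz : chi z = 1 := hchi1 z (by rw [infDist_zero_of_mem hz]; norm_num)
    have hVz : V z = G z := by rw [hVdef]; simp only [hchiz, one_smul]
    have hsum : (inner ℝ (∑ j : Fin m, (lam * w j z) • S j z) (z - xt) : ℝ)
        = lam * ∑ j : Fin m, (w j z) ^ 2 := by
      rw [sum_inner, Finset.mul_sum]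
      apply Finset.sum_congr rfl
      intro j _
      rw [real_inner_smul_left, hwdef]
      ring
    have h1 : -(C0 * R) ≤ (inner ℝ (S0 z) (z - xt) : ℝ) := by
      have ha := abs_real_inner_le_norm (S0 z) (z - xt)
      have hb : ‖S0 z‖ * ‖z - xt‖ ≤ C0 * R :=
        mul_le_mul (hC0 z hz) (hzR z hz) (norm_nonneg _) hC0nn
      have hc := neg_abs_le (inner ℝ (S0 z) (z - xt) : ℝ)
      linarith
    have h2 : C0 * R + 1 ≤ lam * ∑ j : Fin m, (w j z) ^ 2 := by
      have hp := hpinskyK z hz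
      have hdz : δ * d ^ 2 ≤ δ * ‖z - xt‖ ^ 2 := by
        have h := hzd z hz
        have hsq : d ^ 2 ≤ ‖z - xt‖ ^ 2 := by nlinarith [hd.le]
        exact mul_le_mul_of_nonneg_left hsq hδ.le
      have hww : (∑ j : Fin m, (w j z) ^ 2) = ∑ j : Fin m, (inner ℝ (S j z) (z - xt) : ℝ) ^ 2 := by
        apply Finset.sum_congr rfl
        intro j _
        rw [hwdef]
      calc C0 * R + 1 = lam * (δ * d ^ 2) := hlamδ.symm
      _ ≤ lam * (δ * ‖z - xt‖ ^ 2) := mul_le_mul_of_nonneg_left hdz hlam0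
      _ ≤ lam * ∑ j : Fin m, (inner ℝ (S j z) (z - xt) : ℝ) ^ 2 :=
          mul_le_mul_of_nonneg_left hp hlam0
      _ = lam * ∑ j : Fin m, (w j z) ^ 2 := by rw [hww]
    rw [hVz, hGdef]
    simp only
    rw [inner_add_left, hsum]
    linarith
  -- the trajectory must leave Kc before time T0
  have hexit : ∃ t1 ∈ Icc (0:ℝ) T0, f t1 ∉ Kc := by
    by_contra hcon
    push_neg at hcon
    set g : ℝ → ℝ := fun t => (inner ℝ (f t - xt) (f t - xt) : ℝ) - 2 * t with hgdef
    have hgD : ∀ t ∈ Icc (0:ℝ) T0, HasDerivAt g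
        ((inner ℝ (f t - xt) (V (f t)) : ℝ) + (inner ℝ (V (f t)) (f t - xt) : ℝ) - 2) t := by
      intro t ht
      have h1 : HasDerivAt (fun s => f s - xt) (V (f t)) t := (hfD t ht).sub_const xt
      have h2 := HasDerivAt.inner ℝ h1 h1
      have h3 : HasDerivAt (fun s : ℝ => 2 * s) 2 t := by
        simpa using (hasDerivAt_id t).const_mul 2
      exact h2.sub h3
    have hmono : MonotoneOn g (Icc 0 T0) := by
      apply monotoneOn_of_deriv_nonneg (convex_Icc 0 T0)
      · exact fun t ht => ((hgD t ht).continuousAt).continuousWithinAt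
      · intro t ht
        rw [interior_Icc] at ht
        exact ((hgD t (Ioo_subset_Icc_self ht)).differentiableAt).differentiableWithinAt
      · intro t ht
        rw [interior_Icc] at ht
        have ht' := Ioo_subset_Icc_self ht
        rw [(hgD t ht').deriv]
        have hK := hcon t ht'
        have hk1 := hkey _ hK
        have hk2 : (inner ℝ (f t - xt) (V (f t)) : ℝ) = inner ℝ (V (f t)) (f t - xt) :=
          real_inner_comm _ _
        linarith
    have h01 : g 0 ≤ g T0 := hmono (left_mem_Icc.mpr hT0pos.le)
      (right_mem_Icc.mpr hT0pos.le) hT0pos.le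
    have hg0 : 0 ≤ (inner ℝ (f 0 - xt) (f 0 - xt) : ℝ) := real_inner_self_nonneg
    have hgT : (inner ℝ (f T0 - xt) (f T0 - xt) : ℝ) ≤ R ^ 2 := by
      rw [real_inner_self_eq_norm_sq]
      have h1 := hzR _ (hcon T0 (right_mem_Icc.mpr hT0pos.le))
      nlinarith [norm_nonneg (f T0 - xt)]
    rw [hgdef] at h01
    simp only at h01
    rw [hT0def] at h01
    nlinarith [hR0]
  obtain ⟨t1, ht1, hft1⟩ := hexit
  set A : Set ℝ := {t | t ∈ Icc 0 t1 ∧ f t ∉ Kc} with hAdef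
  have hAne : A.Nonempty := ⟨t1, ⟨⟨ht1.1, le_refl _⟩, hft1⟩⟩
  have hAbdd : BddBelow A := ⟨0, fun a ha => ha.1.1⟩
  set τ := sInf A with hτdef
  have hτ0 : 0 ≤ τ := le_csInf hAne (fun a ha => ha.1.1)
  have hτt1 : τ ≤ t1 := csInf_le hAbdd ⟨⟨ht1.1, le_refl _⟩, hft1⟩
  have hτT0 : τ ≤ T0 := le_trans hτt1 ht1.2
  have hbefore : ∀ s, 0 ≤ s → s < τ → f s ∈ Kc := by
    intro s hs0 hsτ
    by_contra hfs
    exact absurd (csInf_le hAbdd ⟨⟨hs0, le_trans hsτ.le hτt1⟩, hfs⟩) (not_le.mpr hsτ)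
  have hfτ : f τ ∈ Kc := by
    by_contra hfτ
    have hτpos : 0 < τ := by
      rcases eq_or_lt_of_le hτ0 with h | h
      · exfalso; apply hfτ; rw [← h, hf0]; exact hx
      · exact h
    have hnhds : f ⁻¹' Kcᶜ ∈ nhds τ :=
      (hfc τ ⟨hτ0, hτT0⟩).preimage_mem_nhds (hKcl.isOpen_compl.mem_nhds hfτ)
    obtain ⟨η, hη0, hη⟩ := Metric.mem_nhds_iff.mp hnhds
    set s := max 0 (τ - η / 2) with hsdef
    have hs1 : s < τ := max_lt hτpos (by linarith)
    have hs2 : s ∈ ball τ η := by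
      rw [mem_ball, Real.dist_eq, abs_of_nonpos (by linarith)]
      have := le_max_right 0 (τ - η / 2)
      simp only [hsdef]
      rcases le_total 0 (τ - η / 2) with h | h
      · rw [max_eq_right h]; linarith
      · rw [max_eq_left h]; linarith
    exact (hη hs2) (hbefore s (le_max_left _ _) hs1)
  obtain ⟨η2, hη20, hη2⟩ := Metric.continuousAt_iff.mp (hfc τ ⟨hτ0, hτT0⟩) 1 one_pos
  obtain ⟨T, hTA, hTlt⟩ := (csInf_lt_iff hAbdd hAne).mp
    (show sInf A < τ + η2 / 2 by rw [← hτdef]; linarith)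
  have hτT : τ ≤ T := csInf_le hAbdd hTA
  have hT0' : 0 ≤ T := hTA.1.1
  have hTT0 : T ≤ T0 := le_trans hTA.1.2 ht1.2
  have hwindow : ∀ s ∈ Icc (0:ℝ) T, infDist (f s) Kc ≤ 1 := by
    intro s hs
    rcases lt_or_ge s τ with h | h
    · rw [infDist_zero_of_mem (hbefore s hs.1 h)]; norm_num
    · have hds : dist s τ < η2 := by
        rw [Real.dist_eq, abs_of_nonneg (by linarith)]
        linarith [hs.2]
      have hd1 : dist (f s) (f τ) < 1 := hη2 hds
      calc infDist (f s) Kc ≤ dist (f s) (f τ) := infDist_le_dist_of_mem hfτ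
      _ ≤ 1 := hd1.le
  -- assemble
  refine ⟨T, hT0', fun t j => chi (f t) * (lam * w j (f t)), ?_, f, hf0, ?_, ?_⟩
  · have hfcont : ContinuousOn f (Icc 0 T) := fun t ht =>
      (hfc t ⟨ht.1, le_trans ht.2 hTT0⟩).continuousWithinAt
    rw [continuousOn_pi]
    intro j
    apply ContinuousOn.mul (hchicont.comp_continuousOn hfcont)
    apply ContinuousOn.mul continuousOn_const
    have : Continuous fun z => w j z := by
      rw [hwdef]
      exact Continuous.inner (hS j).continuous (continuous_id.sub continuous_const)
    exact this.comp_continuousOn hfcont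
  · intro t ht
    have htI : t ∈ Icc (0:ℝ) T0 := ⟨ht.1, le_trans ht.2 hTT0⟩
    have hDt := hfD t htI
    have hchiz : chi (f t) = 1 := hchi1 _ (hwindow t ht)
    have heq : S0 (f t) + ∑ j : Fin m, (chi (f t) * (lam * w j (f t))) • S j (f t)
        = V (f t) := by
      rw [hVdef]
      simp only [hchiz, one_smul, one_mul]
      rfl
    rw [heq]
    exact hDt
  · exact hTA.2
end

section
/- Let D ⊆ ℝⁿ be a bounded open set with closure K satisfying the exterior sphere condition, let F : ℝⁿ → ℝⁿ be a Lipschitz vector field pointing inward D, and let Φ : ℝ × ℝⁿ → ℝⁿ be the flow of F (so Φ_0(x) = x and (d/dt)Φ_t(x) = F(Φ_t(x)) for all t, x). Then: (i) Φ_t(K) ⊆ D for every t > 0; (ii) the set A := ⋂_{t≥0} Φ_t(K) is a compact subset of D satisfying Φ_t(A) = A for every t ∈ ℝ, and for every x ∈ K the ω-limit set of x under Φ (points y such that Φ_{t_k}(x) → y for some t_k → ∞) is contained in A. -/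
open Set Metric Filter Topology

/-- The set `N_p` of unit outward normal vectors to `K` at `p`: unit vectors `v` such that
`dist(p + r v, K) = r` for some `r > 0` (exterior sphere condition at `p` in direction `v`). -/
def outwardNormals {n : ℕ} (K : Set (EuclideanSpace ℝ (Fin n)))
    (p : EuclideanSpace ℝ (Fin n)) : Set (EuclideanSpace ℝ (Fin n)) :=
  {v | ‖v‖ = 1 ∧ ∃ r : ℝ, 0 < r ∧ Metric.infDist (p + r • v) K = r}

set_option maxHeartbeats 1000000 in
/-- if the bounded open set `D` satisfies the exterior sphere condition and the
Lipschitz vector field `F` points inward `D`, then the flow `Φ` of `F` maps `K = closure D`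
into `D` at every positive time, and `A = ⋂_{t ≥ 0} Φ_t(K)` is a compact subset of `D`,
invariant under the flow, containing the ω-limit set of every point of `K`. -/
theorem flow_inward_attractor
    {n : ℕ}
    (D : Set (EuclideanSpace ℝ (Fin n))) (hD : IsOpen D) (hDb : Bornology.IsBounded D)
    (hsphere : ∀ p ∈ frontier D, (outwardNormals (closure D) p).Nonempty)
    (F : EuclideanSpace ℝ (Fin n) → EuclideanSpace ℝ (Fin n))
    (LF : NNReal) (hF : LipschitzWith LF F)
    (hinward : ∀ p ∈ frontier D,
      (∀ v ∈ outwardNormals (closure D) p, (inner ℝ (F p) v : ℝ) ≤ 0) ∧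
      (∃ v ∈ outwardNormals (closure D) p, (inner ℝ (F p) v : ℝ) < 0))
    (Φ : ℝ → EuclideanSpace ℝ (Fin n) → EuclideanSpace ℝ (Fin n))
    (hΦ0 : ∀ x, Φ 0 x = x)
    (hΦode : ∀ x t, HasDerivAt (fun s => Φ s x) (F (Φ t x)) t) :
    (∀ t : ℝ, 0 < t → Φ t '' closure D ⊆ D) ∧
    IsCompact (⋂ t ∈ Set.Ici (0 : ℝ), Φ t '' closure D) ∧
    (⋂ t ∈ Set.Ici (0 : ℝ), Φ t '' closure D) ⊆ D ∧
    (∀ t : ℝ, Φ t '' (⋂ s ∈ Set.Ici (0 : ℝ), Φ s '' closure D) =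
      ⋂ s ∈ Set.Ici (0 : ℝ), Φ s '' closure D) ∧
    (∀ x ∈ closure D, ∀ y : EuclideanSpace ℝ (Fin n),
      (∃ tk : ℕ → ℝ, Tendsto tk atTop atTop ∧
        Tendsto (fun k => Φ (tk k) x) atTop (𝓝 y)) →
      y ∈ ⋂ s ∈ Set.Ici (0 : ℝ), Φ s '' closure D) := by
  set K := closure D with hKdef
  have hKcl : IsClosed K := isClosed_closure
  have hKc : IsCompact K := hDb.isCompact_closure
  have hDK : D ⊆ K := subset_closure
  -- continuity in time
  have hΦcx : ∀ x, Continuous (fun t => Φ t x) := fun x =>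
    continuous_iff_continuousAt.2 fun t => (hΦode x t).continuousAt
  -- Lipschitz estimate in space, for nonnegative times
  have hlip : ∀ t, 0 ≤ t → ∀ x y, dist (Φ t x) (Φ t y) ≤ dist x y * Real.exp (LF * t) := by
    intro t ht x y
    have h := dist_le_of_trajectories_ODE (v := fun _ => F) (K := LF)
      (f := fun s => Φ s x) (g := fun s => Φ s y) (a := 0) (b := t) (δ := dist x y)
      (fun _ => hF) ((hΦcx x).continuousOn) (fun s _ => (hΦode x s).hasDerivWithinAt)
      ((hΦcx y).continuousOn) (fun s _ => (hΦode y s).hasDerivWithinAt)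
      (by simp [hΦ0])
    simpa using h t ⟨ht, le_rfl⟩
  have hΦc : ∀ t, 0 ≤ t → Continuous (Φ t) := by
    intro t ht
    refine (LipschitzWith.of_dist_le_mul
      (K := ⟨Real.exp (LF * t), (Real.exp_pos _).le⟩) (f := Φ t) ?_).continuous
    intro x y
    change dist (Φ t x) (Φ t y) ≤ Real.exp (LF * t) * dist x y; rw [mul_comm]
    exact hlip t ht x y
  -- group law
  have glaw : ∀ s t x, Φ (s + t) x = Φ s (Φ t x) := by
    intro s t x
    have h0 : (0 : ℝ) < |s| + 1 := by positivity
    have h := ODE_solution_unique_of_mem_Icc (v := fun _ => F) (s := fun _ => univ)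
      (K := LF) (fun _ _ => hF.lipschitzOnWith)
      (f := fun u => Φ (u + t) x) (g := fun u => Φ u (Φ t x))
      (t₀ := 0) (a := -(|s| + 1)) (b := |s| + 1)
      ⟨neg_lt_zero.2 h0, h0⟩
      (((hΦcx x).comp (continuous_id.add continuous_const)).continuousOn)
      (fun u _ => (hΦode x (u + t)).comp_add_const u t)
      (fun _ _ => mem_univ _)
      ((hΦcx (Φ t x)).continuousOn)
      (fun u _ => hΦode (Φ t x) u)
      (fun _ _ => mem_univ _)
      (by simp [hΦ0])
    exact h ⟨by linarith [neg_abs_le s], by linarith [le_abs_self s]⟩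
  -- forward invariance of K
  have hinvK : ∀ x ∈ K, ∀ T, 0 ≤ T → Φ T x ∈ K := by
    intro x hx T hT
    by_contra hout
    have hKne : K.Nonempty := ⟨x, hx⟩
    set f := fun t => infDist (Φ t x) K with hfdef
    have hfc : Continuous f := (continuous_infDist_pt K).comp (hΦcx x)
    have hfpos : 0 < f T := (hKcl.notMem_iff_infDist_pos hKne).1 hout
    -- key slope estimate outside K
    have key : ∀ u, Φ u x ∉ K → ∀ ρ, (LF : ℝ) * f u < ρ →
        ∃ᶠ z in 𝓝[>] u, (z - u)⁻¹ * (f z - f u) < ρ := by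
      intro u hu ρ hρ
      obtain ⟨p, hpK, hpd⟩ := hKc.exists_infDist_eq_dist hKne (Φ u x)
      have hd : 0 < dist (Φ u x) p := by
        rw [← hpd]; exact (hKcl.notMem_iff_infDist_pos hKne).1 hu
      set d := dist (Φ u x) p with hddef
      set v : EuclideanSpace ℝ (Fin n) := d⁻¹ • (Φ u x - p) with hvdef
      have hnorm : ‖Φ u x - p‖ = d := by rw [hddef, dist_eq_norm]
      have hv1 : ‖v‖ = 1 := by
        rw [hvdef, norm_smul, hnorm, norm_inv, Real.norm_eq_abs, abs_of_pos hd,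
          inv_mul_cancel₀ hd.ne']
      have hdv : d • v = Φ u x - p := by
        rw [hvdef, smul_smul, mul_inv_cancel₀ hd.ne', one_smul]
      have hpv : p + d • v = Φ u x := by rw [hdv]; abel
      -- p is a boundary point
      have hpF : p ∈ frontier D := by
        rw [hD.frontier_eq]
        refine ⟨hpK, fun hpD => ?_⟩
        obtain ⟨ε, hε, hball⟩ := Metric.isOpen_iff.1 hD p hpD
        set s0 := min (ε / 2) (d / 2) with hs0def
        have hs0 : 0 < s0 := lt_min (by linarith) (by linarith)
        have hs0d : s0 < d := lt_of_le_of_lt (min_le_right _ _) (by linarith)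
        have hp' : p + s0 • v ∈ K := by
          apply hDK; apply hball
          rw [mem_ball, dist_eq_norm]
          simp only [add_sub_cancel_left, norm_smul, hv1, mul_one, Real.norm_eq_abs,
            abs_of_pos hs0]
          exact lt_of_le_of_lt (min_le_left _ _) (by linarith)
        have hle : infDist (Φ u x) K ≤ dist (Φ u x) (p + s0 • v) :=
          infDist_le_dist_of_mem hp'
        have hdist : dist (Φ u x) (p + s0 • v) = d - s0 := by
          rw [dist_eq_norm]
          have : Φ u x - (p + s0 • v) = (d - s0) • v := by
            rw [sub_smul, hdv]; abel
          rw [this, norm_smul, hv1, mul_one, Real.norm_eq_abs,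
            abs_of_pos (by linarith : (0:ℝ) < d - s0)]
        rw [hpd, hdist] at hle
        linarith
      have hvN : v ∈ outwardNormals K p := by
        refine ⟨hv1, d, hd, ?_⟩
        rw [hpv, hpd]
      have hFpv : (inner ℝ (F p) v : ℝ) ≤ 0 := (hinward p hpF).1 v hvN
      -- differentiable majorant g z = ‖Φ z x - p‖
      have hq : HasDerivAt (fun z => (inner ℝ (Φ z x - p) (Φ z x - p) : ℝ))
          ((inner ℝ (Φ u x - p) (F (Φ u x)) : ℝ) + (inner ℝ (F (Φ u x)) (Φ u x - p) : ℝ)) u :=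
        HasDerivAt.inner ℝ ((hΦode x u).sub_const p) ((hΦode x u).sub_const p)
      have hqval : (inner ℝ (Φ u x - p) (Φ u x - p) : ℝ) = d * d := by
        rw [real_inner_self_eq_norm_mul_norm, hnorm]
      have hqne : (inner ℝ (Φ u x - p) (Φ u x - p) : ℝ) ≠ 0 := by
        rw [hqval]; positivity
      have hg := hq.sqrt hqne
      have hgeq : (fun z => Real.sqrt (inner ℝ (Φ z x - p) (Φ z x - p) : ℝ))
          = fun z => ‖Φ z x - p‖ := by
        funext z
        rw [real_inner_self_eq_norm_mul_norm, Real.sqrt_mul_self (norm_nonneg _)]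
      rw [hgeq] at hg
      -- the derivative is at most LF * f u < ρ
      have hderiv_le : ((inner ℝ (Φ u x - p) (F (Φ u x)) : ℝ) + (inner ℝ (F (Φ u x)) (Φ u x - p) : ℝ))
          / (2 * Real.sqrt (inner ℝ (Φ u x - p) (Φ u x - p) : ℝ)) < ρ := by
        have hsq : Real.sqrt (inner ℝ (Φ u x - p) (Φ u x - p) : ℝ) = d := by
          rw [hqval, Real.sqrt_mul_self hd.le]
        rw [hsq]
        have hcomm : (inner ℝ (Φ u x - p) (F (Φ u x)) : ℝ) = (inner ℝ (F (Φ u x)) (Φ u x - p) : ℝ) :=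
          real_inner_comm _ _
        have hsplit : (inner ℝ (F (Φ u x)) (Φ u x - p) : ℝ)
            = d * (inner ℝ (F (Φ u x)) v : ℝ) := by
          rw [← hdv, real_inner_smul_right]
        have hCS : (inner ℝ (F (Φ u x) - F p) v : ℝ) ≤ (LF : ℝ) * d := by
          calc (inner ℝ (F (Φ u x) - F p) v : ℝ) ≤ ‖F (Φ u x) - F p‖ * ‖v‖ :=
                real_inner_le_norm _ _
            _ = ‖F (Φ u x) - F p‖ := by rw [hv1, mul_one]
            _ ≤ (LF : ℝ) * d := by
                have := hF.dist_le_mul (Φ u x) p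
                rw [dist_eq_norm] at this
                rw [← dist_eq_norm, hddef]
                exact hF.dist_le_mul _ _
        have hfu : f u = d := hpd
        have hd2 : (0:ℝ) < 2 * d := by linarith
        rw [hcomm, div_lt_iff₀ hd2]
        have hsub : (inner ℝ (F (Φ u x) - F p) v : ℝ)
            = (inner ℝ (F (Φ u x)) v : ℝ) - (inner ℝ (F p) v : ℝ) := inner_sub_left _ _ _
        have hFv : (inner ℝ (F (Φ u x)) v : ℝ) ≤ (LF : ℝ) * d := by linarith
        have h1 : (inner ℝ (F (Φ u x)) (Φ u x - p) : ℝ) ≤ d * ((LF : ℝ) * d) := by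
          rw [hsplit]
          exact mul_le_mul_of_nonneg_left hFv hd.le
        have h2 : (LF : ℝ) * d < ρ := by rw [← hfu]; exact hρ
        have h3 : d * ((LF : ℝ) * d) < d * ρ := mul_lt_mul_of_pos_left h2 hd
        nlinarith [h1, h3]
      have hfreq := hg.hasDerivWithinAt.liminf_right_slope_le hderiv_le
      -- transfer the slope bound from the majorant to f
      have hfu : f u = ‖Φ u x - p‖ := hpd.trans hnorm.symm
      refine hfreq.mp ?_
      filter_upwards [self_mem_nhdsWithin] with z hz hslope
      rw [slope_def_field] at hslope
      have hzu : (0:ℝ) < z - u := sub_pos.2 hz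
      have hfz : f z ≤ ‖Φ z x - p‖ := by
        rw [← dist_eq_norm]
        exact infDist_le_dist_of_mem hpK
      have : (z - u)⁻¹ * (f z - f u) ≤ (z - u)⁻¹ * (‖Φ z x - p‖ - ‖Φ u x - p‖) := by
        apply mul_le_mul_of_nonneg_left _ (inv_nonneg.2 hzu.le)
        rw [hfu]; linarith
      calc (z - u)⁻¹ * (f z - f u) ≤ (z - u)⁻¹ * (‖Φ z x - p‖ - ‖Φ u x - p‖) := this
        _ = (‖Φ z x - p‖ - ‖Φ u x - p‖) / (z - u) := by ring
        _ < ρ := hslope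
    -- last time in K
    set S := Icc (0:ℝ) T ∩ (fun t => Φ t x) ⁻¹' K with hSdef
    have hScpt : IsCompact S := isCompact_Icc.inter_right (hKcl.preimage (hΦcx x))
    have hS0 : (0:ℝ) ∈ S := ⟨⟨le_rfl, hT⟩, by simp [hΦ0, hx]⟩
    set t1 := sSup S with ht1def
    have ht1S : t1 ∈ S := hScpt.sSup_mem ⟨0, hS0⟩
    have ht1T : t1 < T := by
      rcases lt_or_eq_of_le ht1S.1.2 with h | h
      · exact h
      · exact absurd (by rw [← h] at hout; exact ht1S.2) (by rw [h]; exact fun hh => hout hh)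
    have hgt : ∀ u, t1 < u → u ≤ T → Φ u x ∉ K := by
      intro u h1 h2 hu
      exact absurd (le_csSup hScpt.bddAbove ⟨⟨le_trans ht1S.1.1 h1.le, h2⟩, hu⟩) (not_le.2 h1)
    -- Gronwall on [t1+δ, T]
    have hbd : ∀ δ, 0 < δ → t1 + δ ≤ T → f T ≤ f (t1 + δ) * Real.exp ((LF : ℝ) * T) := by
      intro δ hδ hδT
      have hG := le_gronwallBound_of_liminf_deriv_right_le
        (f := f) (f' := fun u => (LF : ℝ) * f u) (δ := f (t1 + δ)) (K := (LF : ℝ)) (ε := 0)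
        (a := t1 + δ) (b := T) hfc.continuousOn
        (fun u hu ρ hρ => key u (hgt u (by linarith [hu.1]) hu.2.le) ρ hρ)
        le_rfl
        (fun u _ => by simp)
        T ⟨hδT, le_rfl⟩
      rw [gronwallBound_ε0] at hG
      refine hG.trans ?_
      apply mul_le_mul_of_nonneg_left _ infDist_nonneg
      apply Real.exp_le_exp.2
      have h0t1 : 0 ≤ t1 := ht1S.1.1
      have : (LF:ℝ) ≥ 0 := LF.coe_nonneg
      nlinarith
    -- take δ → 0⁺
    have hft1 : f t1 = 0 := infDist_zero_of_mem ht1S.2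
    have htend : Tendsto (fun δ : ℝ => f (t1 + δ) * Real.exp ((LF : ℝ) * T)) (𝓝[>] 0)
        (𝓝 0) := by
      have h1 : Tendsto (fun δ : ℝ => t1 + δ) (𝓝[>] (0:ℝ)) (𝓝 t1) := by
        have h1' : Tendsto (fun δ : ℝ => t1 + δ) (𝓝 (0:ℝ)) (𝓝 (t1 + 0)) :=
          (continuous_const.add continuous_id).tendsto 0
        rw [add_zero] at h1'
        exact h1'.mono_left nhdsWithin_le_nhds
      have h2 : Tendsto (fun δ : ℝ => f (t1 + δ)) (𝓝[>] (0:ℝ)) (𝓝 0) := by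
        have h2' := (hfc.tendsto t1).comp h1
        rw [hft1] at h2'
        exact h2'
      simpa using h2.mul tendsto_const_nhds
    have hfT : f T ≤ 0 := by
      refine ge_of_tendsto htend ?_
      filter_upwards [Ioo_mem_nhdsGT_of_mem ⟨le_rfl, sub_pos.2 ht1T⟩] with δ hδ
      exact hbd δ hδ.1 (by linarith [hδ.2])
    linarith
  -- strict entry into D at positive times
  have hexit : ∀ x ∈ K, ∀ t, 0 < t → Φ t x ∈ D := by
    intro x hx t ht
    by_contra hnD
    have hpF : Φ t x ∈ frontier D := by
      rw [hD.frontier_eq]; exact ⟨hinvK x hx t ht.le, hnD⟩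
    obtain ⟨v, ⟨hv1, r, hr, hrd⟩, hlt⟩ := (hinward _ hpF).2
    set c := Φ t x + r • v with hcdef
    have hψ : HasDerivAt (fun s => (inner ℝ (Φ s x - c) (Φ s x - c) : ℝ))
        ((inner ℝ (Φ t x - c) (F (Φ t x)) : ℝ) + (inner ℝ (F (Φ t x)) (Φ t x - c) : ℝ)) t :=
      HasDerivAt.inner ℝ ((hΦode x t).sub_const c) ((hΦode x t).sub_const c)
    have hpc : Φ t x - c = -(r • v) := by rw [hcdef]; abel
    have hdpos : 0 < (inner ℝ (Φ t x - c) (F (Φ t x)) : ℝ) + (inner ℝ (F (Φ t x)) (Φ t x - c) : ℝ) := by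
      rw [hpc, inner_neg_left, inner_neg_right, real_inner_smul_left, real_inner_smul_right]
      have hcomm : (inner ℝ v (F (Φ t x)) : ℝ) = (inner ℝ (F (Φ t x)) v : ℝ) := real_inner_comm _ _
      rw [hcomm]
      nlinarith [hr, hlt]
    have hslope := hasDerivAt_iff_tendsto_slope.1 hψ
    have hev1 : ∀ᶠ s in 𝓝[<] t, 0 < slope (fun s => (inner ℝ (Φ s x - c) (Φ s x - c) : ℝ)) t s := by
      apply (hslope.eventually (eventually_gt_nhds hdpos)).filter_mono
      exact nhdsWithin_mono t fun s hs => ne_of_lt hs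
    have hev2 : ∀ᶠ s in 𝓝[<] t, (0:ℝ) < s :=
      eventually_nhdsWithin_of_eventually_nhds (eventually_gt_nhds ht)
    have hev3 : ∀ᶠ s in 𝓝[<] t, s < t := eventually_mem_nhdsWithin
    obtain ⟨s, hsl, hs0, hst⟩ := (hev1.and (hev2.and hev3)).exists
    -- from the positive slope and s < t, ψ s < ψ t
    rw [slope_def_field] at hsl
    have hψlt : (inner ℝ (Φ s x - c) (Φ s x - c) : ℝ) < (inner ℝ (Φ t x - c) (Φ t x - c) : ℝ) := by
      rcases div_pos_iff.1 hsl with ⟨_, h⟩ | ⟨h, _⟩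
      · linarith
      · linarith
    -- but ψ t = r² and ψ s ≥ r²
    have hψt : (inner ℝ (Φ t x - c) (Φ t x - c) : ℝ) = r * r := by
      rw [real_inner_self_eq_norm_mul_norm, hpc, norm_neg, norm_smul, hv1, mul_one,
        Real.norm_eq_abs, abs_of_pos hr]
    have hmem : Φ s x ∈ K := hinvK x hx s hs0.le
    have hge : r ≤ ‖Φ s x - c‖ := by
      have := infDist_le_dist_of_mem (x := c) hmem
      rw [hrd] at this
      calc r ≤ dist c (Φ s x) := this
        _ = ‖Φ s x - c‖ := by rw [dist_eq_norm, norm_sub_rev]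
    have hψs : r * r ≤ (inner ℝ (Φ s x - c) (Φ s x - c) : ℝ) := by
      rw [real_inner_self_eq_norm_mul_norm]
      exact mul_le_mul hge hge hr.le (norm_nonneg _)
    rw [hψt] at hψlt
    linarith
  -- part 1
  have part1 : ∀ t : ℝ, 0 < t → Φ t '' K ⊆ D := by
    rintro t ht _ ⟨x, hx, rfl⟩
    exact hexit x hx t ht
  have hAsub : ∀ s : ℝ, 0 ≤ s → (⋂ t ∈ Set.Ici (0:ℝ), Φ t '' K) ⊆ Φ s '' K :=
    fun s hs => biInter_subset_of_mem hs
  have hA_K : (⋂ t ∈ Set.Ici (0:ℝ), Φ t '' K) ⊆ K := by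
    intro a ha
    obtain ⟨z, hz, hzz⟩ := hAsub 0 le_rfl ha
    rw [hΦ0] at hzz
    rwa [← hzz]
  have hAcl : IsClosed (⋂ t ∈ Set.Ici (0:ℝ), Φ t '' K) :=
    isClosed_biInter fun t ht => (hKc.image (hΦc t ht)).isClosed
  have hAcpt : IsCompact (⋂ t ∈ Set.Ici (0:ℝ), Φ t '' K) :=
    hKc.of_isClosed_subset hAcl hA_K
  have hAD : (⋂ t ∈ Set.Ici (0:ℝ), Φ t '' K) ⊆ D :=
    (hAsub 1 one_pos.le).trans (part1 1 one_pos)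
  -- points of A flow inside K at all times
  have hAmem : ∀ x ∈ (⋂ t ∈ Set.Ici (0:ℝ), Φ t '' K), ∀ u : ℝ, Φ u x ∈ K := by
    intro x hx u
    rcases le_or_gt 0 u with h | h
    · exact hinvK x (hA_K hx) u h
    · obtain ⟨z, hz, hzx⟩ := hAsub (-u) (by linarith) hx
      have : Φ u x = z := by
        rw [← hzx, ← glaw]
        simp [hΦ0]
      rwa [this]
  -- part 4: invariance
  have part4 : ∀ t : ℝ, Φ t '' (⋂ s ∈ Set.Ici (0:ℝ), Φ s '' K) = ⋂ s ∈ Set.Ici (0:ℝ), Φ s '' K := by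
    intro t
    apply Subset.antisymm
    · rintro _ ⟨x, hxA, rfl⟩
      refine mem_iInter₂.2 fun s hs => ?_
      exact ⟨Φ (t - s) x, hAmem x hxA _, by rw [← glaw, show s + (t - s) = t by ring]⟩
    · intro x hxA
      refine ⟨Φ (-t) x, ?_, by rw [← glaw]; simp [hΦ0]⟩
      refine mem_iInter₂.2 fun s hs => ?_
      exact ⟨Φ (-t - s) x, hAmem x hxA _, by rw [← glaw, show s + (-t - s) = -t by ring]⟩
  -- part 5: omega limit sets
  have part5 : ∀ x ∈ K, ∀ y : EuclideanSpace ℝ (Fin n),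
      (∃ tk : ℕ → ℝ, Tendsto tk atTop atTop ∧ Tendsto (fun k => Φ (tk k) x) atTop (𝓝 y)) →
      y ∈ ⋂ s ∈ Set.Ici (0:ℝ), Φ s '' K := by
    rintro x hx y ⟨tk, htk, hconv⟩
    refine mem_iInter₂.2 fun s hs => ?_
    have hclosed : IsClosed (Φ s '' K) := (hKc.image (hΦc s hs)).isClosed
    refine hclosed.mem_of_tendsto hconv ?_
    filter_upwards [htk.eventually_ge_atTop s] with k hk
    exact ⟨Φ (tk k - s) x, hinvK x hx _ (by linarith [mem_Ici.1 hs]),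
      by rw [← glaw, show s + (tk k - s) = tk k by ring]⟩
  exact ⟨part1, hAcpt, hAD, part4, part5⟩
end

section
/- Let D ⊆ ℝⁿ be a bounded open set with closure K satisfying the strong exterior sphere condition, let p ∈ ∂D, and let s₀, s₁, …, s_m ∈ ℝⁿ be given vectors. Then the following two conditions are equivalent: (a) N_p ∩ (−N_p) = ∅ and for every v ∈ N_p one has ⟨s₀, v⟩ < 0 or Σ_{i=1}^m ⟨s_i, v⟩² ≠ 0; (b) there exists a vector w in the linear span of {s₁, …, s_m} such that ⟨s₀ + w, v⟩ < 0 for every v ∈ N_p. -/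
open Set Metric

/-- The convex hull of a compact set in a finite-dimensional normed real vector space
is compact. -/
lemma aux_isCompact_convexHull {F : Type*} [NormedAddCommGroup F] [NormedSpace ℝ F]
    [FiniteDimensional ℝ F] {s : Set F} (hs : IsCompact s) : IsCompact (convexHull ℝ s) := by
  classical
  rcases s.eq_empty_or_nonempty with rfl | ⟨x0, hx0⟩
  · simp
  set d := Module.finrank ℝ F + 1 with hd
  have h1 : convexHull ℝ s =
      (fun q : (Fin d → ℝ) × (Fin d → F) => ∑ i, q.1 i • q.2 i) ''
        (stdSimplex ℝ (Fin d) ×ˢ Set.univ.pi fun _ => s) := by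
    apply Subset.antisymm
    · intro x hx
      obtain ⟨ι, hι, z, w, hzs, hai, hw0, hw1, hwz⟩ := eq_pos_convex_span_of_mem_convexHull hx
      have hne : Nonempty ι := by
        by_contra h
        rw [not_nonempty_iff] at h
        rw [Finset.univ_eq_empty, Finset.sum_empty] at hw1
        norm_num at hw1
      have hcard : Fintype.card ι ≤ d := by
        have h3 := hai.card_le_finrank_succ
        have h2 : Module.finrank ℝ (vectorSpan ℝ (Set.range z)) ≤ Module.finrank ℝ F :=
          Submodule.finrank_le _
        omega
      obtain ⟨e⟩ : Nonempty (ι ↪ Fin d) :=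
        Function.Embedding.nonempty_of_card_le (by simpa using hcard)
      set w' : Fin d → ℝ := fun j => if h : ∃ i, e i = j then w h.choose else 0 with hw'
      set z' : Fin d → F := fun j => if h : ∃ i, e i = j then z h.choose else x0 with hz'
      have hwe : ∀ i, w' (e i) = w i := by
        intro i
        have h : ∃ i', e i' = e i := ⟨i, rfl⟩
        simp only [hw', dif_pos h]
        rw [e.injective h.choose_spec]
      have hze : ∀ i, z' (e i) = z i := by
        intro i
        have h : ∃ i', e i' = e i := ⟨i, rfl⟩
        simp only [hz', dif_pos h]
        rw [e.injective h.choose_spec]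
      have hnotmem : ∀ j : Fin d, j ∉ Finset.univ.map e → w' j = 0 := by
        intro j hj
        have : ¬ ∃ i, e i = j := by
          intro ⟨i, hi⟩
          exact hj (Finset.mem_map.2 ⟨i, Finset.mem_univ i, hi⟩)
        simp only [hw', dif_neg this]
      have hsum1 : ∑ j, w' j = 1 := by
        rw [← Finset.sum_subset (Finset.subset_univ (Finset.univ.map e))
          (fun j _ hj => hnotmem j hj)]
        rw [Finset.sum_map]
        simpa only [hwe] using hw1
      have hsum2 : ∑ j, w' j • z' j = x := by
        rw [← Finset.sum_subset (Finset.subset_univ (Finset.univ.map e))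
          (fun j _ hj => by rw [hnotmem j hj, zero_smul])]
        rw [Finset.sum_map]
        simp only [hwe, hze]
        exact hwz
      refine ⟨(w', z'), ⟨⟨fun j => ?_, hsum1⟩, fun j _ => ?_⟩, hsum2⟩
      · by_cases h : ∃ i, e i = j
        · simp only [hw', dif_pos h]; exact (hw0 _).le
        · simp only [hw', dif_neg h]
          exact le_refl 0
      · by_cases h : ∃ i, e i = j
        · simp only [hz', dif_pos h]; exact hzs ⟨h.choose, rfl⟩
        · simp only [hz', dif_neg h]; exact hx0
    · rintro x ⟨⟨w, z⟩, ⟨hw, hz⟩, rfl⟩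
      exact (convex_convexHull ℝ s).sum_mem (fun i _ => hw.1 i) hw.2
        (fun i _ => subset_convexHull ℝ s (hz i (Set.mem_univ i)))
  rw [h1]
  exact ((isCompact_stdSimplex ℝ _).prod (isCompact_univ_pi fun _ => hs)).image
    (continuous_finset_sum _ fun i _ =>
      ((continuous_apply i).comp continuous_fst).smul ((continuous_apply i).comp continuous_snd))

/-- Characterization of the exterior tangent ball condition via inner ℝ products. -/
lemma aux_infDist_sphere_iff {n : ℕ} {K : Set (EuclideanSpace ℝ (Fin n))}
    {p v : EuclideanSpace ℝ (Fin n)} (hpK : p ∈ K) (hv : ‖v‖ = 1) {r : ℝ} (hr : 0 < r) :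
    Metric.infDist (p + r • v) K = r ↔
      ∀ x ∈ K, 2 * r * (inner ℝ (x - p) v : ℝ) ≤ ‖x - p‖ ^ 2 := by
  have hdist : ∀ x : EuclideanSpace ℝ (Fin n),
      dist (p + r • v) x ^ 2 = ‖x - p‖ ^ 2 - 2 * r * (inner ℝ (x - p) v : ℝ) + r ^ 2 := by
    intro x
    rw [dist_eq_norm]
    have h1 : p + r • v - x = r • v - (x - p) := by abel
    rw [h1, norm_sub_sq_real, real_inner_smul_left, norm_smul, real_inner_comm]
    simp only [Real.norm_eq_abs, hv, mul_one, abs_of_pos hr]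
    ring
  constructor
  · intro h x hx
    have h1 : r ≤ dist (p + r • v) x := by
      have h5 := Metric.infDist_le_dist_of_mem (x := p + r • v) hx
      linarith
    have h2 := hdist x
    have h4 : r ^ 2 ≤ dist (p + r • v) x ^ 2 := pow_le_pow_left₀ hr.le h1 2
    linarith
  · intro h
    refine le_antisymm ?_ ?_
    · have h5 := Metric.infDist_le_dist_of_mem (x := p + r • v) hpK
      have h6 : dist (p + r • v) p = r := by
        rw [dist_eq_norm]
        simp [norm_smul, hv, abs_of_pos hr]
      linarith
    · by_contra hlt
      push_neg at hlt
      obtain ⟨x, hx, hdx⟩ := (Metric.infDist_lt_iff ⟨p, hpK⟩).1 hlt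
      have h2 := hdist x
      have h3 := h x hx
      have h5 := dist_nonneg (x := p + r • v) (y := x)
      have h4 : dist (p + r • v) x ^ 2 < r ^ 2 := by nlinarith
      linarith

/-- for a bounded open set `D` satisfying the strong exterior sphere condition
(uniform radius `R > 0`), a boundary point `p`, and vectors `s₀, s₁, …, s_m`, the following
are equivalent: (a) `N_p ∩ (−N_p) = ∅` and for every `v ∈ N_p`, `⟪s₀,v⟫ < 0` or
`∑ᵢ ⟪sᵢ,v⟫² ≠ 0`; (b) there exists `w ∈ span{s₁,…,s_m}` with `⟪s₀ + w, v⟫ < 0` for every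
`v ∈ N_p`. -/
theorem inward_pointing_characterization
    {n m : ℕ}
    (D : Set (EuclideanSpace ℝ (Fin n))) (hD : IsOpen D) (hDb : Bornology.IsBounded D)
    (hsphere : ∀ q ∈ frontier D, (outwardNormals (closure D) q).Nonempty)
    (hstrong : ∃ R : ℝ, 0 < R ∧ ∀ q ∈ frontier D, ∀ v ∈ outwardNormals (closure D) q,
      ∃ r : ℝ, R ≤ r ∧ Metric.infDist (q + r • v) (closure D) = r)
    (p : EuclideanSpace ℝ (Fin n)) (hp : p ∈ frontier D)
    (s0 : EuclideanSpace ℝ (Fin n)) (s : Fin m → EuclideanSpace ℝ (Fin n)) :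
    ((∀ v ∈ outwardNormals (closure D) p, -v ∉ outwardNormals (closure D) p) ∧
      ∀ v ∈ outwardNormals (closure D) p,
        (inner ℝ s0 v : ℝ) < 0 ∨ (∑ i : Fin m, (inner ℝ (s i) v : ℝ) ^ 2) ≠ 0) ↔
    (∃ w ∈ Submodule.span ℝ (Set.range s),
      ∀ v ∈ outwardNormals (closure D) p, (inner ℝ (s0 + w) v : ℝ) < 0) := by
  classical
  obtain ⟨R, hR, hRs⟩ := hstrong
  set K := closure D with hKdef
  have hpK : p ∈ K := frontier_subset_closure hp
  set N := outwardNormals K p with hNdef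
  -- membership characterization with uniform radius R
  have hmem : ∀ v, v ∈ N ↔ ‖v‖ = 1 ∧
      ∀ x ∈ K, 2 * R * (inner ℝ (x - p) v : ℝ) ≤ ‖x - p‖ ^ 2 := by
    intro v
    constructor
    · intro hvN
      have hv1 := hvN.1
      obtain ⟨r, hRr, hrd⟩ := hRs p hp v hvN
      have hr : 0 < r := lt_of_lt_of_le hR hRr
      have h := (aux_infDist_sphere_iff hpK hv1 hr).1 hrd
      refine ⟨hv1, fun x hx => ?_⟩
      have h2 := h x hx
      rcases le_or_gt 0 ((inner ℝ (x - p) v : ℝ)) with h0 | h0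
      · nlinarith
      · nlinarith [sq_nonneg ‖x - p‖]
    · rintro ⟨hv1, h⟩
      exact ⟨hv1, R, hR, (aux_infDist_sphere_iff hpK hv1 hR).2 h⟩
  -- rescaling lemma
  have hQscale : ∀ u : EuclideanSpace ℝ (Fin n), u ≠ 0 →
      (∀ x ∈ K, 2 * R * (inner ℝ (x - p) u : ℝ) ≤ ‖x - p‖ ^ 2) → (‖u‖⁻¹ • u) ∈ N := by
    intro u hu hQ
    have hpos : (0 : ℝ) < ‖u‖ := norm_pos_iff.2 hu
    have h1 : ‖(‖u‖⁻¹ • u)‖ = 1 := by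
      rw [norm_smul, Real.norm_eq_abs, abs_of_pos (inv_pos.2 hpos), inv_mul_cancel₀ hpos.ne']
    refine ⟨h1, R * ‖u‖, by positivity, (aux_infDist_sphere_iff hpK h1 (by positivity)).2 ?_⟩
    intro x hx
    have h2 := hQ x hx
    rw [inner_smul_right]
    have hc : ‖u‖ * ‖u‖⁻¹ = 1 := mul_inv_cancel₀ hpos.ne'
    nlinarith [h2]
  constructor
  · -- (a) → (b)
    rintro ⟨ha1, ha2⟩
    rcases Set.eq_empty_or_nonempty N with hNe | hNne
    · exact ⟨0, Submodule.zero_mem _, fun v hv => by rw [hNe] at hv; exact absurd hv (Set.notMem_empty v)⟩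
    -- N is compact
    have hNclosed : IsClosed N := by
      have hNeq : N = Metric.sphere 0 1 ∩
          {u | ∀ x ∈ K, 2 * R * (inner ℝ (x - p) u : ℝ) ≤ ‖x - p‖ ^ 2} := by
        ext v
        rw [Set.mem_inter_iff, mem_sphere_zero_iff_norm, Set.mem_setOf_eq, hmem v]
      rw [hNeq]
      refine isClosed_sphere.inter ?_
      have heq2 : {u : EuclideanSpace ℝ (Fin n) |
            ∀ x ∈ K, 2 * R * (inner ℝ (x - p) u : ℝ) ≤ ‖x - p‖ ^ 2}
          = ⋂ x ∈ K, {u | 2 * R * (inner ℝ (x - p) u : ℝ) ≤ ‖x - p‖ ^ 2} := by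
        ext u; simp
      rw [heq2]
      exact isClosed_biInter fun x hx => isClosed_le
        (continuous_const.mul (Continuous.inner continuous_const continuous_id)) continuous_const
    have hNcomp : IsCompact N := by
      apply Metric.isCompact_of_isClosed_isBounded hNclosed
      refine Metric.isBounded_closedBall (x := (0 : EuclideanSpace ℝ (Fin n))) (r := 1) |>.subset ?_
      intro v hv
      rw [Metric.mem_closedBall, dist_zero_right]
      exact le_of_eq ((hmem v).1 hv).1
    set C := convexHull ℝ N with hCdef
    have hCcomp : IsCompact C := aux_isCompact_convexHull hNcomp
    have hCconv : Convex ℝ C := convex_convexHull ℝ N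
    have hNC : N ⊆ C := subset_convexHull ℝ N
    -- every element of C satisfies the Q condition
    have hCQ : ∀ u ∈ C, ∀ x ∈ K, 2 * R * (inner ℝ (x - p) u : ℝ) ≤ ‖x - p‖ ^ 2 := by
      have hQconv : Convex ℝ {u : EuclideanSpace ℝ (Fin n) |
          ∀ x ∈ K, 2 * R * (inner ℝ (x - p) u : ℝ) ≤ ‖x - p‖ ^ 2} := by
        intro u hu v hv a b ha hb hab x hx
        have h1 := hu x hx
        have h2 := hv x hx
        rw [inner_add_right, inner_smul_right, inner_smul_right]
        nlinarith
      exact fun u hu => convexHull_min (fun v hv => ((hmem v).1 hv).2) hQconv hu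
    -- 0 is not in C
    have h0C : (0 : EuclideanSpace ℝ (Fin n)) ∉ C := by
      intro h0
      obtain ⟨ι, hι, z, w, hzs, hai, hw0, hw1, hwz⟩ := eq_pos_convex_span_of_mem_convexHull h0
      have hne : Nonempty ι := by
        by_contra h
        rw [not_nonempty_iff] at h
        rw [Finset.univ_eq_empty, Finset.sum_empty] at hw1
        norm_num at hw1
      obtain ⟨j⟩ := hne
      have hzmem : ∀ i, z i ∈ N := fun i => hzs ⟨i, rfl⟩
      set u : EuclideanSpace ℝ (Fin n) := -(w j • z j) with hu
      have hQu : ∀ x ∈ K, 2 * R * (inner ℝ (x - p) u : ℝ) ≤ ‖x - p‖ ^ 2 := by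
        intro x hx
        have e1 : ∑ i, w i * (inner ℝ (x - p) (z i) : ℝ) = 0 := by
          have e0 : (inner ℝ (x - p) (∑ i, w i • z i) : ℝ) = 0 := by
            rw [hwz, inner_zero_right]
          rw [inner_sum] at e0
          simpa only [inner_smul_right] using e0
        have e2 : w j * (inner ℝ (x - p) (z j) : ℝ) +
            ∑ i ∈ Finset.univ.erase j, w i * (inner ℝ (x - p) (z i) : ℝ) = 0 := by
          rw [Finset.add_sum_erase Finset.univ
            (fun i => w i * (inner ℝ (x - p) (z i) : ℝ)) (Finset.mem_univ j)]
          exact e1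
        have e3 : 2 * R * (∑ i ∈ Finset.univ.erase j, w i * (inner ℝ (x - p) (z i) : ℝ))
            ≤ (∑ i ∈ Finset.univ.erase j, w i) * ‖x - p‖ ^ 2 := by
          rw [Finset.mul_sum, Finset.sum_mul]
          refine Finset.sum_le_sum fun i _ => ?_
          have hzi := ((hmem (z i)).1 (hzmem i)).2 x hx
          nlinarith [(hw0 i).le]
        have e4 : ∑ i ∈ Finset.univ.erase j, w i = 1 - w j := by
          have := Finset.add_sum_erase Finset.univ w (Finset.mem_univ j)
          rw [hw1] at this
          linarith
        have e5 : (0:ℝ) ≤ ‖x - p‖ ^ 2 := sq_nonneg _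
        have e6 : (inner ℝ (x - p) u : ℝ) = -(w j * (inner ℝ (x - p) (z j) : ℝ)) := by
          rw [hu, inner_neg_right, inner_smul_right]
        rw [e6]
        nlinarith [hw0 j, (hw0 j).le]
      have hzj1 : ‖z j‖ = 1 := ((hmem (z j)).1 (hzmem j)).1
      have hzj0 : z j ≠ 0 := by
        intro h
        rw [h, norm_zero] at hzj1
        norm_num at hzj1
      have hu0 : u ≠ 0 := by
        rw [hu, neg_ne_zero]
        exact smul_ne_zero (hw0 j).ne' hzj0
      have hscaled := hQscale u hu0 hQu
      have hnu : ‖u‖ = w j := by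
        rw [hu, norm_neg, norm_smul, Real.norm_eq_abs, abs_of_pos (hw0 j), hzj1, mul_one]
      have heq : ‖u‖⁻¹ • u = -(z j) := by
        rw [hnu, hu, smul_neg, smul_smul, inv_mul_cancel₀ (hw0 j).ne', one_smul]
      rw [heq] at hscaled
      exact ha1 (z j) (hzmem j) hscaled
    -- the separation argument
    let T : EuclideanSpace ℝ (Fin n) →L[ℝ] ℝ × (Fin m → ℝ) :=
      (innerSL ℝ s0).prod (ContinuousLinearMap.pi fun i => innerSL ℝ (s i))
    have hTapp : ∀ u, T u = ((inner ℝ s0 u : ℝ), fun i => (inner ℝ (s i) u : ℝ)) := fun u => rfl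
    set A : Set (ℝ × (Fin m → ℝ)) := T '' C with hAdef
    have hAconv : Convex ℝ A := hCconv.linear_image T.toLinearMap
    have hAcomp : IsCompact A := hCcomp.image T.continuous
    set B : Set (ℝ × (Fin m → ℝ)) := Set.Ici (0:ℝ) ×ˢ ({0} : Set (Fin m → ℝ)) with hBdef
    have hBconv : Convex ℝ B := (convex_Ici 0).prod (convex_singleton 0)
    have hBclosed : IsClosed B := isClosed_Ici.prod isClosed_singleton
    have hAB : Disjoint A B := by
      rw [Set.disjoint_left]
      rintro q ⟨u, huC, rfl⟩ hqB
      rw [hBdef, Set.mem_prod] at hqB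
      obtain ⟨hq1, hq2⟩ := hqB
      rw [hTapp] at hq1 hq2
      have hs0u : (0:ℝ) ≤ (inner ℝ s0 u : ℝ) := hq1
      have hsi : ∀ i, (inner ℝ (s i) u : ℝ) = 0 := by
        intro i
        have := Set.mem_singleton_iff.1 hq2
        exact congrFun this i
      have hu0 : u ≠ 0 := fun h => h0C (h ▸ huC)
      have hvN := hQscale u hu0 (hCQ u huC)
      have hnormpos : (0:ℝ) < ‖u‖ := norm_pos_iff.2 hu0
      rcases ha2 (‖u‖⁻¹ • u) hvN with hlt | hsne
      · rw [inner_smul_right] at hlt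
        nlinarith [inv_pos.2 hnormpos]
      · apply hsne
        apply Finset.sum_eq_zero
        intro i _
        rw [inner_smul_right, hsi i, mul_zero]
        norm_num
    obtain ⟨f, a, b, hfA, hab, hfB⟩ :=
      geometric_hahn_banach_compact_closed hAconv hAcomp hBconv hBclosed hAB
    have hb0 : b < 0 := by
      have h1 := hfB 0 ⟨Set.self_mem_Ici, rfl⟩
      rw [map_zero] at h1
      exact h1
    set c := f (1, (0 : Fin m → ℝ)) with hcdef
    have hc0 : 0 ≤ c := by
      by_contra hcneg
      push_neg at hcneg
      have hx : (0:ℝ) ≤ (b - 1) / c := le_of_lt (div_pos_of_neg_of_neg (by linarith) hcneg)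
      have hmemB : (((b - 1) / c, (0 : Fin m → ℝ)) : ℝ × (Fin m → ℝ)) ∈ B := ⟨hx, rfl⟩
      have h1 := hfB _ hmemB
      have heval : f ((b - 1) / c, (0 : Fin m → ℝ)) = b - 1 := by
        have h2 : (((b - 1) / c, (0 : Fin m → ℝ)) : ℝ × (Fin m → ℝ))
            = ((b - 1) / c) • (1, (0 : Fin m → ℝ)) := by
          rw [Prod.smul_mk, smul_eq_mul, mul_one, smul_zero]
        rw [h2, map_smul, smul_eq_mul, ← hcdef, div_mul_cancel₀ _ hcneg.ne]
      rw [heval] at h1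
      linarith
    set aa : Fin m → ℝ := fun i => f ((0:ℝ), (Pi.single i 1 : Fin m → ℝ)) with haadef
    have hfeval : ∀ u, f (T u) = c * (inner ℝ s0 u : ℝ) + ∑ i, aa i * (inner ℝ (s i) u : ℝ) := by
      intro u
      have hdecomp : T u = (inner ℝ s0 u : ℝ) • ((1:ℝ), (0 : Fin m → ℝ))
          + ∑ i, (inner ℝ (s i) u : ℝ) • ((0:ℝ), (Pi.single i 1 : Fin m → ℝ)) := by
        rw [hTapp]
        refine Prod.ext ?_ ?_
        · simp [Prod.fst_sum]
        · funext j
          simp only [Prod.snd_add, Prod.smul_mk, Prod.snd_sum, smul_zero, Pi.add_apply,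
            Pi.zero_apply, zero_add, Finset.sum_apply, Pi.smul_apply, Pi.single_apply,
            smul_eq_mul, mul_ite, mul_one, mul_zero]
          rw [Finset.sum_ite_eq Finset.univ j (fun i => (inner ℝ (s i) u : ℝ))]
          simp
      have hterm : ∀ i : Fin m,
          f ((inner ℝ (s i) u : ℝ) • ((0:ℝ), (Pi.single i 1 : Fin m → ℝ)))
            = aa i * (inner ℝ (s i) u : ℝ) := by
        intro i
        rw [map_smul, smul_eq_mul]
        simp only [haadef]
        ring
      rw [hdecomp, map_add, map_smul, map_sum, smul_eq_mul, ← hcdef]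
      simp only [hterm]
      ring
    have hkey : ∀ u ∈ C, c * (inner ℝ s0 u : ℝ) + ∑ i, aa i * (inner ℝ (s i) u : ℝ) < a := by
      intro u hu
      have := hfA (T u) ⟨u, hu, rfl⟩
      rw [hfeval] at this
      exact this
    set w0 : EuclideanSpace ℝ (Fin n) := ∑ i, aa i • s i with hw0def
    have hw0span : w0 ∈ Submodule.span ℝ (Set.range s) :=
      Submodule.sum_mem _ fun i _ =>
        Submodule.smul_mem _ _ (Submodule.subset_span ⟨i, rfl⟩)
    have hw0inner : ∀ u : EuclideanSpace ℝ (Fin n),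
        (inner ℝ w0 u : ℝ) = ∑ i, aa i * (inner ℝ (s i) u : ℝ) := by
      intro u
      rw [hw0def, sum_inner]
      exact Finset.sum_congr rfl fun i _ => real_inner_smul_left _ _ _
    have ha0 : a < 0 := lt_trans hab hb0
    rcases hc0.lt_or_eq with hcpos | hczero
    · -- c > 0
      refine ⟨c⁻¹ • w0, Submodule.smul_mem _ _ hw0span, fun v hv => ?_⟩
      have h1 := hkey v (hNC hv)
      rw [← hw0inner] at h1
      have h2 : c * (inner ℝ s0 v : ℝ) + (inner ℝ w0 v : ℝ) < 0 := lt_trans h1 ha0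
      have h3 : c⁻¹ * (c * (inner ℝ s0 v : ℝ) + (inner ℝ w0 v : ℝ)) < 0 :=
        mul_neg_of_pos_of_neg (inv_pos.2 hcpos) h2
      have h5 : (inner ℝ s0 v : ℝ) + c⁻¹ * (inner ℝ w0 v : ℝ)
          = c⁻¹ * (c * (inner ℝ s0 v : ℝ) + (inner ℝ w0 v : ℝ)) := by
        field_simp
      rw [inner_add_left, real_inner_smul_left, h5]
      exact h3
    · -- c = 0
      have hwneg : ∀ v ∈ N, (inner ℝ w0 v : ℝ) < a := by
        intro v hv
        have h1 := hkey v (hNC hv)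
        rw [← hw0inner, ← hczero, zero_mul, zero_add] at h1
        exact h1
      set t : ℝ := (‖s0‖ + 1) * (-a)⁻¹ with htdef
      have htpos : 0 < t := by
        apply mul_pos
        · positivity
        · exact inv_pos.2 (by linarith)
      have hane : a ≠ 0 := ne_of_lt ha0
      have hta : t * a = -(‖s0‖ + 1) := by
        rw [htdef, inv_neg]
        field_simp
      refine ⟨t • w0, Submodule.smul_mem _ _ hw0span, fun v hv => ?_⟩
      rw [inner_add_left, real_inner_smul_left]
      have h1 := hwneg v hv
      have h2 : (inner ℝ s0 v : ℝ) ≤ ‖s0‖ := by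
        have h3 := real_inner_le_norm s0 v
        rw [((hmem v).1 hv).1, mul_one] at h3
        exact h3
      nlinarith
  · -- (b) → (a)
    rintro ⟨w, hw, hww⟩
    obtain ⟨c, hc⟩ := (Submodule.mem_span_range_iff_exists_fun ℝ).1 hw
    have hinner_w : ∀ v : EuclideanSpace ℝ (Fin n),
        (∀ i, (inner ℝ (s i) v : ℝ) = 0) → (inner ℝ w v : ℝ) = 0 := by
      intro v hv
      rw [← hc, sum_inner]
      apply Finset.sum_eq_zero
      intro i _
      rw [real_inner_smul_left, hv i, mul_zero]
    constructor
    · intro v hv hnv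
      have h1 := hww v hv
      have h2 := hww (-v) hnv
      rw [inner_neg_right] at h2
      linarith
    · intro v hv
      by_contra hcon
      push_neg at hcon
      obtain ⟨h1, h2⟩ := hcon
      have h3 : ∀ i, (inner ℝ (s i) v : ℝ) = 0 := by
        intro i
        have h4 := (Finset.sum_eq_zero_iff_of_nonneg
          (fun i _ => sq_nonneg ((inner ℝ (s i) v : ℝ)))).1 h2 i (Finset.mem_univ i)
        exact pow_eq_zero_iff two_ne_zero |>.1 h4
      have h5 := hww v hv
      rw [inner_add_left, hinner_w v h3] at h5
      linarith
end

section
/- Let D ⊆ ℝⁿ be an open set with compact closure K, and let η_n, η : [0,∞) → ℝⁿ be continuous paths with η_n → η uniformly on every compact time interval and η(0) ∈ K. Then: (a) limsup_{n→∞} τ_K^out(η_n) ≤ τ_K^out(η); (b) for every continuous f : K → [0,∞) vanishing on K∖D and every t ≥ 0, limsup_{n→∞} F_n(t) ≤ F(t), where F_n(t) equals f(η_n(t)) if τ_K^out(η_n) > t and 0 otherwise, and F(t) equals f(η(t)) if τ_K^out(η) > t and 0 otherwise. -/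
open Set Filter Topology
open scoped ENNReal Classical

/-- The exit time of the path `η` from the set `A`, as an extended nonnegative real:
`τ_A^out(η) = inf {t ≥ 0 : η t ∉ A}`, with `inf ∅ = ∞`. -/
noncomputable def exitTime {E : Type*} (A : Set E) (η : ℝ → E) : ℝ≥0∞ :=
  sInf {s : ℝ≥0∞ | ∃ t : ℝ, 0 ≤ t ∧ η t ∉ A ∧ s = ENNReal.ofReal t}

/-- for continuous paths `η_k → η` uniformly on compact time intervals with
`η 0 ∈ K = closure D` (`D` open with compact closure), (a) `limsup_k τ_K^out(η_k) ≤ τ_K^out(η)`,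
and (b) for every continuous `f ≥ 0` on `K` vanishing on `K∖D` and every `t ≥ 0`,
`limsup_k f(η_k t) 1_{τ_K(η_k) > t} ≤ f(η t) 1_{τ_K(η) > t}`. -/
theorem exit_time_upper_semicontinuity_closure
    {n : ℕ} (D : Set (EuclideanSpace ℝ (Fin n))) (hD : IsOpen D)
    (hK : IsCompact (closure D))
    (η : ℕ → ℝ → EuclideanSpace ℝ (Fin n)) (ηl : ℝ → EuclideanSpace ℝ (Fin n))
    (hcont : ∀ k, ContinuousOn (η k) (Set.Ici (0 : ℝ)))
    (hcontl : ContinuousOn ηl (Set.Ici (0 : ℝ)))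
    (hconv : ∀ T : ℝ, 0 ≤ T →
      TendstoUniformlyOn (fun k t => η k t) ηl atTop (Set.Icc 0 T))
    (h0 : ηl 0 ∈ closure D) :
    (limsup (fun k => exitTime (closure D) (η k)) atTop ≤ exitTime (closure D) ηl) ∧
    (∀ f : EuclideanSpace ℝ (Fin n) → ℝ, ContinuousOn f (closure D) →
      (∀ x ∈ closure D, 0 ≤ f x) → (∀ x ∈ closure D \ D, f x = 0) →
      ∀ t : ℝ, 0 ≤ t →
        limsup (fun k =>
            if ENNReal.ofReal t < exitTime (closure D) (η k) then f (η k t) else 0) atTop ≤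
          (if ENNReal.ofReal t < exitTime (closure D) ηl then f (ηl t) else 0)) := by
  set K := closure D with hKdef
  have hKc : IsClosed K := isClosed_closure
  -- membership before the exit time
  have hmem : ∀ (γ : ℝ → EuclideanSpace ℝ (Fin n)) (t : ℝ), 0 ≤ t →
      ENNReal.ofReal t < exitTime K γ → γ t ∈ K := by
    intro γ t ht hlt
    by_contra h
    exact absurd (sInf_le ⟨t, ht, h, rfl⟩ : exitTime K γ ≤ ENNReal.ofReal t) (not_le.2 hlt)
  -- pointwise convergence
  have htend : ∀ t : ℝ, 0 ≤ t → Tendsto (fun k => η k t) atTop (𝓝 (ηl t)) := by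
    intro t ht
    exact (hconv t ht).tendsto_at ⟨ht, le_rfl⟩
  -- exit observed in the limit is eventually observed
  have hevout : ∀ s : ℝ, 0 ≤ s → ηl s ∉ K → ∀ᶠ k in atTop, η k s ∉ K := by
    intro s hs hout
    exact (htend s hs).eventually_mem (hKc.isOpen_compl.mem_nhds hout)
  constructor
  · -- part (a)
    apply le_sInf
    rintro b ⟨t, ht, hout, rfl⟩
    apply limsup_le_of_le (by isBoundedDefault)
    filter_upwards [hevout t ht hout] with k hk
    exact sInf_le ⟨t, ht, hk, rfl⟩
  · -- part (b)
    intro f hf hf0 hfb t ht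
    set g : ℕ → ℝ := fun k =>
      if ENNReal.ofReal t < exitTime K (η k) then f (η k t) else 0 with hg
    have hgnn : ∀ k, 0 ≤ g k := by
      intro k
      simp only [hg]
      split_ifs with h
      · exact hf0 _ (hmem (η k) t ht h)
      · exact le_rfl
    have hcob : IsCoboundedUnder (· ≤ ·) atTop g :=
      (isBoundedUnder_of ⟨0, fun k => hgnn k⟩ :
        IsBoundedUnder (· ≥ ·) atTop g).isCoboundedUnder_le
    -- key estimate: if ηl t ∈ K then limsup g ≤ f (ηl t)
    have key : ηl t ∈ K → limsup g atTop ≤ f (ηl t) := by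
      intro hmemK
      refine le_of_forall_pos_le_add ?_
      intro ε hε
      refine limsup_le_of_le hcob ?_
      have hcw : ContinuousWithinAt f K (ηl t) := hf _ hmemK
      have hV : {x | f x < f (ηl t) + ε} ∈ 𝓝[K] (ηl t) :=
        hcw (Iio_mem_nhds (by linarith))
      rw [mem_nhdsWithin] at hV
      obtain ⟨U, hUopen, hUmem, hUsub⟩ := hV
      filter_upwards [(htend t ht).eventually_mem (hUopen.mem_nhds hUmem)] with k hk
      simp only [hg]
      split_ifs with h
      · exact le_of_lt (hUsub ⟨hk, hmem (η k) t ht h⟩)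
      · linarith [hf0 _ hmemK]
    by_cases hA : ∃ s, 0 ≤ s ∧ s ≤ t ∧ ηl s ∉ K
    · obtain ⟨s, hs0, hst, hout⟩ := hA
      have hτ : exitTime K ηl ≤ ENNReal.ofReal t :=
        le_trans (sInf_le ⟨s, hs0, hout, rfl⟩) (ENNReal.ofReal_le_ofReal hst)
      rw [if_neg (not_lt.2 hτ)]
      refine limsup_le_of_le hcob ?_
      filter_upwards [hevout s hs0 hout] with k hk
      have hτk : exitTime K (η k) ≤ ENNReal.ofReal t :=
        le_trans (sInf_le ⟨s, hs0, hk, rfl⟩) (ENNReal.ofReal_le_ofReal hst)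
      simp only [hg, if_neg (not_lt.2 hτk), le_refl]
    · push_neg at hA
      have hKt : ηl t ∈ K := hA t ht le_rfl
      by_cases hcase : ENNReal.ofReal t < exitTime K ηl
      · rw [if_pos hcase]; exact key hKt
      · rw [if_neg hcase]
        push_neg at hcase
        have hnotD : ηl t ∉ D := by
          intro hmemD
          have hct : ContinuousWithinAt ηl (Ici 0) t := hcontl t ht
          have hev : ∀ᶠ s in 𝓝[Ici 0] t, ηl s ∈ D :=
            hct.eventually_mem (hD.mem_nhds hmemD)
          rw [Filter.Eventually, Metric.mem_nhdsWithin_iff] at hev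
          obtain ⟨δ, hδ, hball⟩ := hev
          have hlt : exitTime K ηl < ENNReal.ofReal (t + δ) :=
            lt_of_le_of_lt hcase
              ((ENNReal.ofReal_lt_ofReal_iff (by linarith)).2 (by linarith))
          rw [exitTime, sInf_lt_iff] at hlt
          obtain ⟨b, ⟨s, hs0, hout, rfl⟩, hb⟩ := hlt
          have hslt : s < t + δ :=
            (ENNReal.ofReal_lt_ofReal_iff (by linarith)).1 hb
          have hsgt : ¬ s ≤ t := fun h => hout (hA s hs0 h)
          push_neg at hsgt
          have hmemD' : ηl s ∈ D := by
            refine hball ⟨?_, hs0⟩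
            rw [Metric.mem_ball, Real.dist_eq, abs_lt]
            constructor <;> linarith
          exact hout (subset_closure hmemD')
        have hzero : f (ηl t) = 0 := hfb _ ⟨hKt, hnotD⟩
        calc limsup g atTop ≤ f (ηl t) := key hKt
          _ = 0 := hzero
end

section
/- Let λ > 1. Then there exists a unique θ ∈ (0, π) with λ sin θ = θ. Moreover, setting H(x) = sin(θx)/θ and ω = λ(1 + cos θ), one has ω > 0, H(x) > 0 for every x ∈ (0,1], and the identity −H'(x) + λ(H(1−x) − H(x)) = −ω H(x) holds for every x ∈ [0,1]. -/
open Set Real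

private lemma deriv_f (lam : ℝ) :
    deriv (fun θ : ℝ => lam * Real.sin θ - θ) = fun θ => lam * Real.cos θ - 1 := by
  funext θ
  exact (((Real.hasDerivAt_sin θ).const_mul lam).sub (hasDerivAt_id θ)).deriv

private lemma strict_concave (lam : ℝ) (hlam : 0 < lam) :
    StrictConcaveOn ℝ (Set.Icc 0 Real.pi) (fun θ : ℝ => lam * Real.sin θ - θ) := by
  apply strictConcaveOn_of_deriv2_neg (convex_Icc _ _)
  · exact (continuous_const.mul Real.continuous_sin).sub continuous_id |>.continuousOn
  · intro x hx
    rw [interior_Icc] at hx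
    have : deriv^[2] (fun θ : ℝ => lam * Real.sin θ - θ) x = -(lam * Real.sin x) := by
      rw [Function.iterate_succ, Function.iterate_one, Function.comp_apply, deriv_f]
      have := (((Real.hasDerivAt_cos x).const_mul lam).sub_const 1).deriv
      simpa using this
    rw [this]
    have := Real.sin_pos_of_pos_of_lt_pi hx.1 hx.2
    nlinarith

private lemma root_unique (lam : ℝ) (hlam : 0 < lam) :
    ∀ a ∈ Set.Ioo 0 Real.pi, ∀ b ∈ Set.Ioo 0 Real.pi,
      lam * Real.sin a = a → lam * Real.sin b = b → a = b := by
  have key : ∀ a b : ℝ, a ∈ Set.Ioo 0 Real.pi → b ∈ Set.Ioo 0 Real.pi →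
      lam * Real.sin a = a → lam * Real.sin b = b → a < b → False := by
    intro a b ha hb hfa hfb hab
    have hcon := strict_concave lam hlam
    have h0 : (0 : ℝ) ∈ Set.Icc 0 Real.pi := ⟨le_refl 0, Real.pi_pos.le⟩
    have hbmem : b ∈ Set.Icc 0 Real.pi := ⟨hb.1.le, hb.2.le⟩
    have hb0 : (0 : ℝ) ≠ b := (ne_of_lt hb.1)
    have hs : 0 < 1 - a / b := by
      have := (div_lt_one hb.1).2 hab
      linarith
    have ht : 0 < a / b := div_pos ha.1 hb.1
    have := hcon.2 h0 hbmem hb0 hs ht (by ring)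
    simp only [smul_eq_mul] at this
    have hab' : (1 - a / b) * 0 + a / b * b = a := by
      field_simp
      ring
    rw [hab'] at this
    rw [Real.sin_zero] at this
    -- this : (1-a/b)*(lam*0-0) + (a/b)*(lam*sin b - b) < lam*sin a - a
    rw [hfb, hfa] at this
    simp at this
  intro a ha b hb hfa hfb
  rcases lt_trichotomy a b with h | h | h
  · exact absurd (key a b ha hb hfa hfb h) (by simp)
  · exact h
  · exact absurd (key b a hb ha hfb hfa h) (by simp)

/-- for `λ > 1` there is a unique `θ ∈ (0, π)` with `λ sin θ = θ`; and for this
`θ`, setting `H(x) = sin(θx)/θ` and `ω = λ(1 + cos θ)`, one has `ω > 0`, `H > 0` on `(0,1]`,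
and `−H'(x) + λ(H(1−x) − H(x)) = −ω H(x)` on `[0,1]`. -/
theorem pdmp_eigenfunction_identity_of_one_lt
    (lam : ℝ) (hlam : 1 < lam) :
    (∃! θ : ℝ, θ ∈ Set.Ioo 0 Real.pi ∧ lam * Real.sin θ = θ) ∧
    ∀ θ ∈ Set.Ioo 0 Real.pi, lam * Real.sin θ = θ →
      0 < lam * (1 + Real.cos θ) ∧
      (∀ x ∈ Set.Ioc (0 : ℝ) 1, 0 < Real.sin (θ * x) / θ) ∧
      (∀ x ∈ Set.Icc (0 : ℝ) 1,
        -(deriv (fun y : ℝ => Real.sin (θ * y) / θ) x) +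
          lam * (Real.sin (θ * (1 - x)) / θ - Real.sin (θ * x) / θ) =
        -(lam * (1 + Real.cos θ)) * (Real.sin (θ * x) / θ)) := by
  have hlam0 : 0 < lam := lt_trans one_pos hlam
  constructor
  · -- existence and uniqueness
    set c : ℝ := min 1 (Real.sqrt (4 * (1 - 1 / lam))) with hc
    have hε : 0 < 1 - 1 / lam := by
      have : 1 / lam < 1 := (div_lt_one hlam0).2 hlam
      linarith
    have hcpos : 0 < c := lt_min one_pos (Real.sqrt_pos.2 (by linarith))
    have hc1 : c ≤ 1 := min_le_left _ _
    have hcsq : c ^ 2 ≤ 4 * (1 - 1 / lam) := by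
      have h1 : c ≤ Real.sqrt (4 * (1 - 1 / lam)) := min_le_right _ _
      have := Real.sq_sqrt (by linarith : (0:ℝ) ≤ 4 * (1 - 1 / lam))
      nlinarith [hcpos.le]
    have hfc : 0 < lam * Real.sin c - c := by
      have h1 : c - c ^ 3 / 4 < Real.sin c := by have := Real.sin_gt_sub_cube hcpos; linarith [pow_pos hcpos 3]
      have key : lam * c ^ 2 ≤ 4 * lam - 4 := by
        have h := mul_le_mul_of_nonneg_left hcsq hlam0.le
        have h' : lam * (4 * (1 - 1 / lam)) = 4 * lam - 4 := by field_simp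
        linarith
      have h2 : c / lam ≤ c - c ^ 3 / 4 := by
        rw [div_le_iff₀ hlam0]
        nlinarith [mul_le_mul_of_nonneg_left key hcpos.le]
      have : c / lam < Real.sin c := lt_of_le_of_lt h2 h1
      have := (div_lt_iff₀ hlam0).1 this
      nlinarith
    have hcpi : c < Real.pi := lt_of_le_of_lt hc1 (by linarith [Real.pi_gt_three])
    -- IVT on [c, π]
    have hcont : ContinuousOn (fun θ : ℝ => lam * Real.sin θ - θ) (Set.Icc c Real.pi) :=
      ((continuous_const.mul Real.continuous_sin).sub continuous_id).continuousOn
    have hivt := intermediate_value_Ioo' hcpi.le hcont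
    have h0mem : (0 : ℝ) ∈ Set.Ioo (lam * Real.sin Real.pi - Real.pi) (lam * Real.sin c - c) := by
      constructor
      · rw [Real.sin_pi]
        simp
        linarith [Real.pi_pos]
      · exact hfc
    obtain ⟨θ, hθmem, hθeq⟩ := hivt h0mem
    have hθIoo : θ ∈ Set.Ioo 0 Real.pi := ⟨lt_trans hcpos hθmem.1, hθmem.2⟩
    have hθeq' : lam * Real.sin θ - θ = 0 := hθeq
    have hθroot : lam * Real.sin θ = θ := by linarith
    refine ⟨θ, ⟨hθIoo, hθroot⟩, ?_⟩
    intro y ⟨hy, hyeq⟩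
    exact root_unique lam hlam0 y hy θ hθIoo hyeq hθroot
  · intro θ hθ hθeq
    have hθ0 : (0:ℝ) < θ := hθ.1
    have hθne : θ ≠ 0 := ne_of_gt hθ0
    refine ⟨?_, ?_, ?_⟩
    · -- ω > 0
      have h1 : Real.cos (θ / 2) ^ 2 = 1 / 2 + Real.cos (2 * (θ / 2)) / 2 := Real.cos_sq _
      rw [show 2 * (θ / 2) = θ by ring] at h1
      have h2 : 0 < Real.cos (θ / 2) := by
        apply Real.cos_pos_of_mem_Ioo
        constructor <;> [linarith [Real.pi_pos]; linarith [hθ.2]]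
      nlinarith
    · intro x hx
      apply div_pos _ hθ0
      apply Real.sin_pos_of_pos_of_lt_pi (mul_pos hθ0 hx.1)
      calc θ * x ≤ θ * 1 := by nlinarith [hx.2]
        _ < Real.pi := by simpa using hθ.2
    · intro x _
      have hd : deriv (fun y : ℝ => Real.sin (θ * y) / θ) x = Real.cos (θ * x) := by
        have h1 : HasDerivAt (fun y : ℝ => θ * y) θ x := by
          simpa using (hasDerivAt_id x).const_mul θ
        have h2 : HasDerivAt (fun y : ℝ => Real.sin (θ * y)) (Real.cos (θ * x) * θ) x :=
          (Real.hasDerivAt_sin (θ * x)).comp x h1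
        have h3 := (h2.div_const θ).deriv
        rw [h3]
        field_simp
      rw [hd, show θ * (1 - x) = θ - θ * x by ring, Real.sin_sub]
      field_simp
      linear_combination (Real.cos (θ * x) * (1 - θ) + Real.cos (θ * x) * θ) * hθeq
end

section
/- Let 0 < λ < 1. Then there exists a unique θ > 0 with λ sinh θ = θ. Moreover, setting H(x) = sinh(θx)/θ and ω = λ(1 + cosh θ), one has ω > 0, H(x) > 0 for every x ∈ (0,1], and the identity −H'(x) + λ(H(1−x) − H(x)) = −ω H(x) holds for every x ∈ [0,1]. (For λ = 1, the same identity holds with H(x) = x and ω = 2.) -/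
open Set Real

private lemma strictConvexOn_sinh_Ici : StrictConvexOn ℝ (Set.Ici (0:ℝ)) Real.sinh :=
  StrictMonoOn.strictConvexOn_of_deriv (convex_Ici 0) Real.continuous_sinh.continuousOn
    (by
      rw [Real.deriv_sinh, interior_Ici]
      exact Real.cosh_strictMonoOn.mono Ioi_subset_Ici_self)

private lemma sinh_le_mul_cosh {x : ℝ} (hx : 0 ≤ x) : Real.sinh x ≤ x * Real.cosh x := by
  have hmono : MonotoneOn (fun y : ℝ => y * Real.cosh y - Real.sinh y) (Set.Ici 0) := by
    have hd : ∀ y : ℝ, HasDerivAt (fun y : ℝ => y * Real.cosh y - Real.sinh y)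
        (1 * Real.cosh y + y * Real.sinh y - Real.cosh y) y := fun y =>
      ((hasDerivAt_id y).mul (Real.hasDerivAt_cosh y)).sub (Real.hasDerivAt_sinh y)
    refine monotoneOn_of_deriv_nonneg (convex_Ici 0)
      (Continuous.continuousOn (by continuity)) (fun y _ => ((hd y).differentiableAt).differentiableWithinAt) ?_
    intro y hy
    rw [interior_Ici] at hy
    rw [(hd y).deriv]
    have h1 : 0 ≤ y * Real.sinh y := mul_nonneg (le_of_lt hy) (by simpa using le_of_lt hy)
    nlinarith
  have h0 : (0:ℝ) ∈ Set.Ici (0:ℝ) := Set.mem_Ici.2 le_rfl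
  have := hmono h0 hx hx
  simp at this
  linarith

private lemma uniq_aux (lam : ℝ) (hlam0 : 0 < lam) {a b : ℝ} (ha : 0 < a) (hab : a < b)
    (hea : lam * Real.sinh a = a) (heb : lam * Real.sinh b = b) : False := by
  have hb : 0 < b := ha.trans hab
  have hq : 0 < a / b := div_pos ha hb
  have hp : 0 < 1 - a / b := by
    have : a / b < 1 := (div_lt_one hb).2 hab
    linarith
  have key := strictConvexOn_sinh_Ici.2 (Set.self_mem_Ici) (le_of_lt hb)
    (ne_of_lt hb) hp hq (by ring)
  simp only [smul_eq_mul, mul_zero, zero_add, Real.sinh_zero] at key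
  have hab' : a / b * b = a := div_mul_cancel₀ a (ne_of_gt hb)
  rw [hab'] at key
  -- key : sinh a < a/b * sinh b
  have h1 : lam * Real.sinh a < lam * (a / b * Real.sinh b) :=
    (mul_lt_mul_iff_right₀ hlam0).2 key
  rw [hea] at h1
  have h2 : lam * (a / b * Real.sinh b) = a / b * (lam * Real.sinh b) := by ring
  rw [h2, heb, hab'] at h1
  exact lt_irrefl a h1

/-- for `0 < λ < 1` there is a unique `θ > 0` with `λ sinh θ = θ`; and for this
`θ`, setting `H(x) = sinh(θx)/θ` and `ω = λ(1 + cosh θ)`, one has `ω > 0`, `H > 0` on `(0,1]`,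
and `−H'(x) + λ(H(1−x) − H(x)) = −ω H(x)` on `[0,1]`.  (For `λ = 1` the same identity holds
with `H(x) = x` and `ω = 2`.) -/
theorem pdmp_eigenfunction_identity_of_lt_one
    (lam : ℝ) (hlam0 : 0 < lam) (hlam1 : lam < 1) :
    (∃! θ : ℝ, 0 < θ ∧ lam * Real.sinh θ = θ) ∧
    (∀ θ : ℝ, 0 < θ → lam * Real.sinh θ = θ →
      0 < lam * (1 + Real.cosh θ) ∧
      (∀ x ∈ Set.Ioc (0 : ℝ) 1, 0 < Real.sinh (θ * x) / θ) ∧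
      (∀ x ∈ Set.Icc (0 : ℝ) 1,
        -(deriv (fun y : ℝ => Real.sinh (θ * y) / θ) x) +
          lam * (Real.sinh (θ * (1 - x)) / θ - Real.sinh (θ * x) / θ) =
        -(lam * (1 + Real.cosh θ)) * (Real.sinh (θ * x) / θ))) ∧
    (∀ x ∈ Set.Icc (0 : ℝ) 1,
      -(deriv (fun y : ℝ => y) x) + 1 * ((1 - x) - x) = -(2 : ℝ) * x) := by
  refine ⟨?_, ?_, ?_⟩
  · -- existence and uniqueness
    -- choose a small point where lam * sinh < id
    set l : ℝ := Real.log (1 / lam) with hl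
    have hlam_inv : 1 < 1 / lam := (one_lt_div hlam0).2 hlam1
    have hlpos : 0 < l := Real.log_pos hlam_inv
    set ε : ℝ := l / 2 with hε
    have hεpos : 0 < ε := by positivity
    have hcosh_lt : Real.cosh ε < 1 / lam := by
      have h1 : Real.cosh ε < Real.exp ε := by
        rw [Real.cosh_eq]
        have : Real.exp (-ε) < Real.exp ε := Real.exp_lt_exp.2 (by linarith)
        linarith
      have h2 : Real.exp ε < Real.exp l := Real.exp_lt_exp.2 (by rw [hε]; linarith)
      have h3 : Real.exp l = 1 / lam := Real.exp_log (by positivity)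
      linarith
    have hεsmall : lam * Real.sinh ε < ε := by
      have h1 : Real.sinh ε ≤ ε * Real.cosh ε := sinh_le_mul_cosh hεpos.le
      have h2 : lam * Real.cosh ε < 1 := by
        rw [lt_div_iff₀ hlam0] at hcosh_lt
        linarith [mul_comm lam (Real.cosh ε)]
      calc lam * Real.sinh ε ≤ lam * (ε * Real.cosh ε) := by
            exact (mul_le_mul_iff_right₀ hlam0).2 h1
        _ = ε * (lam * Real.cosh ε) := by ring
        _ < ε * 1 := (mul_lt_mul_iff_right₀ hεpos).2 h2
        _ = ε := mul_one ε
    -- large point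
    set T : ℝ := 8 / lam with hT
    have hTpos : 0 < T := by positivity
    have hTbig : T < lam * Real.sinh T := by
      have he1 : (1 + T / 2) ≤ Real.exp (T / 2) := by
        have := Real.add_one_le_exp (T / 2); linarith
      have he2 : (1 + T / 2) ^ 2 ≤ Real.exp T := by
        have h := mul_le_mul he1 he1 (by positivity) (Real.exp_nonneg _)
        calc (1 + T / 2) ^ 2 = (1 + T / 2) * (1 + T / 2) := sq (1 + T/2) ▸ by ring
          _ ≤ Real.exp (T / 2) * Real.exp (T / 2) := h
          _ = Real.exp T := by rw [← Real.exp_add]; ring_nf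
      have he3 : Real.exp (-T) ≤ 1 := Real.exp_le_one_iff.2 (by linarith)
      have hs : (T / 2 + T ^ 2 / 8) ≤ Real.sinh T := by
        rw [Real.sinh_eq]
        nlinarith
      have hT8 : lam * T = 8 := by rw [hT]; field_simp
      nlinarith
    have hεT : ε ≤ T := by
      have h1 : l ≤ 1 / lam - 1 := Real.log_le_sub_one_of_pos (by positivity)
      have h2 : 1 / lam ≤ 8 / lam := by
        rw [div_le_div_iff₀ hlam0 hlam0]; nlinarith
      rw [hε, hT]; linarith
    have hcont : ContinuousOn (fun θ => lam * Real.sinh θ - θ) (Set.Icc ε T) :=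
      Continuous.continuousOn (by continuity)
    have hIVT := intermediate_value_Icc hεT hcont
    have h0mem : (0:ℝ) ∈ Set.Icc (lam * Real.sinh ε - ε) (lam * Real.sinh T - T) :=
      ⟨by linarith, by linarith⟩
    obtain ⟨θ, hθmem, hθeq⟩ := hIVT h0mem
    have hθpos : 0 < θ := lt_of_lt_of_le hεpos hθmem.1
    have hθfix : lam * Real.sinh θ = θ := by
      have : lam * Real.sinh θ - θ = 0 := hθeq
      linarith
    refine ⟨θ, ⟨hθpos, hθfix⟩, ?_⟩
    rintro y ⟨hy0, hyfix⟩
    rcases lt_trichotomy y θ with h | h | h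
    · exact absurd (uniq_aux lam hlam0 hy0 h hyfix hθfix) not_false
    · exact h
    · exact absurd (uniq_aux lam hlam0 hθpos h hθfix hyfix) not_false
  · intro θ hθ hfix
    have hθne : θ ≠ 0 := ne_of_gt hθ
    refine ⟨by positivity, ?_, ?_⟩
    · intro x hx
      exact div_pos (by rw [Real.sinh_pos_iff]; exact mul_pos hθ hx.1) hθ
    · intro x _
      have hd : HasDerivAt (fun y : ℝ => Real.sinh (θ * y) / θ) (Real.cosh (θ * x) * θ / θ) x := by
        have h1 : HasDerivAt (fun y : ℝ => θ * y) θ x := by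
          simpa using (hasDerivAt_id x).const_mul θ
        exact ((Real.hasDerivAt_sinh (θ * x)).comp x h1).div_const θ
      rw [hd.deriv]
      rw [show θ * (1 - x) = θ - θ * x by ring, Real.sinh_sub]
      field_simp
      nlinarith [hfix, Real.cosh_pos (θ * x), Real.cosh_pos θ]
  · intro x _
    simp only [deriv_id'']
    ring
end

section
/- Let λ > 0, let f₀, f₁ : [0,1] → ℝ be continuous, and for a ∈ ℝ define g₀(x) = ∫₀ˣ [f₀(u) − λ(x−u)(f₀(u) + f₁(u))] du + aλx and g₁(x) = ∫₀ˣ [−f₁(u) − λ(x−u)(f₀(u) + f₁(u))] du + a(λx + 1). Then g₀ and g₁ are C¹ on [0,1], g₀(0) = 0, g₁(0) = a, and for every x ∈ [0,1]: −g₀'(x) + λ(g₁(x) − g₀(x)) = −f₀(x) and g₁'(x) + λ(g₀(x) − g₁(x)) = −f₁(x). Moreover, there exists a unique a ∈ ℝ such that in addition g₁(1) = 0. -/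
open Set intervalIntegral MeasureTheory

private lemma my_ii {f : ℝ → ℝ} (hf : ContinuousOn f (Icc 0 1)) {x : ℝ}
    (hx : x ∈ Icc (0:ℝ) 1) : IntervalIntegrable f volume 0 x :=
  (hf.mono (by rw [Set.uIcc_of_le hx.1]; exact Set.Icc_subset_Icc le_rfl hx.2)).intervalIntegrable

private lemma my_ftc {f : ℝ → ℝ} (hf : ContinuousOn f (Icc 0 1)) {x : ℝ}
    (hx : x ∈ Icc (0:ℝ) 1) :
    HasDerivWithinAt (fun y => ∫ u in (0:ℝ)..y, f u) (f x) (Icc 0 1) x := by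
  haveI : Fact (x ∈ Icc (0:ℝ) 1) := ⟨hx⟩
  exact intervalIntegral.integral_hasDerivWithinAt_right (my_ii hf hx)
    ⟨Icc 0 1, self_mem_nhdsWithin, hf.aestronglyMeasurable measurableSet_Icc⟩
    (hf.continuousWithinAt hx)

/-- explicit solution of the boundary value problem `L g = −f` for the
piecewise deterministic Markov process generator: the functions
`g₀(x) = ∫₀ˣ [f₀(u) − λ(x−u)(f₀(u)+f₁(u))] du + aλx` and
`g₁(x) = ∫₀ˣ [−f₁(u) − λ(x−u)(f₀(u)+f₁(u))] du + a(λx+1)` are `C¹` on `[0,1]`, satisfy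
`g₀(0) = 0`, `g₁(0) = a`, the equations `−g₀' + λ(g₁ − g₀) = −f₀` and
`g₁' + λ(g₀ − g₁) = −f₁` on `[0,1]`, and there is exactly one `a ∈ ℝ` with `g₁(1) = 0`. -/
theorem pdmp_green_explicit_solution
    (lam : ℝ) (hlam : 0 < lam)
    (f0 f1 : ℝ → ℝ)
    (hf0 : ContinuousOn f0 (Set.Icc 0 1)) (hf1 : ContinuousOn f1 (Set.Icc 0 1))
    (g0 g1 : ℝ → ℝ → ℝ)
    (hg0 : ∀ a x : ℝ, g0 a x =
      (∫ u in (0 : ℝ)..x, (f0 u - lam * (x - u) * (f0 u + f1 u))) + a * lam * x)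
    (hg1 : ∀ a x : ℝ, g1 a x =
      (∫ u in (0 : ℝ)..x, (-f1 u - lam * (x - u) * (f0 u + f1 u))) + a * (lam * x + 1)) :
    (∀ a : ℝ,
      g0 a 0 = 0 ∧ g1 a 0 = a ∧
      ∃ d0 d1 : ℝ → ℝ, ContinuousOn d0 (Set.Icc 0 1) ∧ ContinuousOn d1 (Set.Icc 0 1) ∧
        ∀ x ∈ Set.Icc (0 : ℝ) 1,
          HasDerivWithinAt (g0 a) (d0 x) (Set.Icc 0 1) x ∧
          HasDerivWithinAt (g1 a) (d1 x) (Set.Icc 0 1) x ∧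
          (-(d0 x) + lam * (g1 a x - g0 a x) = -(f0 x)) ∧
          (d1 x + lam * (g0 a x - g1 a x) = -(f1 x))) ∧
    (∃! a : ℝ, g1 a 1 = 0) := by
  have hs : ContinuousOn (fun u => f0 u + f1 u) (Icc (0:ℝ) 1) := hf0.add hf1
  have hus : ContinuousOn (fun u => u * (f0 u + f1 u)) (Icc (0:ℝ) 1) :=
    (continuousOn_id).mul hs
  set F0 : ℝ → ℝ := fun x => ∫ u in (0:ℝ)..x, f0 u with hF0
  set F1 : ℝ → ℝ := fun x => ∫ u in (0:ℝ)..x, f1 u with hF1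
  set G : ℝ → ℝ := fun x => ∫ u in (0:ℝ)..x, (f0 u + f1 u) with hG
  set Hh : ℝ → ℝ := fun x => ∫ u in (0:ℝ)..x, u * (f0 u + f1 u) with hHh
  have hGsplit : ∀ x ∈ Icc (0:ℝ) 1, G x = F0 x + F1 x := fun x hx =>
    intervalIntegral.integral_add (my_ii hf0 hx) (my_ii hf1 hx)
  have key0 : ∀ x ∈ Icc (0:ℝ) 1,
      (∫ u in (0:ℝ)..x, (f0 u - lam * (x - u) * (f0 u + f1 u)))
        = F0 x - lam * (x * G x - Hh x) := by
    intro x hx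
    have e : ∀ u : ℝ, f0 u - lam * (x - u) * (f0 u + f1 u)
        = f0 u - ((lam * x) * (f0 u + f1 u) - lam * (u * (f0 u + f1 u))) := fun u => by ring
    simp only [e]
    rw [intervalIntegral.integral_sub (my_ii hf0 hx)
        (((my_ii hs hx).const_mul _).sub ((my_ii hus hx).const_mul _)),
      intervalIntegral.integral_sub ((my_ii hs hx).const_mul _) ((my_ii hus hx).const_mul _),
      intervalIntegral.integral_const_mul, intervalIntegral.integral_const_mul]
    ring
  have key1 : ∀ x ∈ Icc (0:ℝ) 1,
      (∫ u in (0:ℝ)..x, (-f1 u - lam * (x - u) * (f0 u + f1 u)))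
        = -F1 x - lam * (x * G x - Hh x) := by
    intro x hx
    have e : ∀ u : ℝ, -f1 u - lam * (x - u) * (f0 u + f1 u)
        = -f1 u - ((lam * x) * (f0 u + f1 u) - lam * (u * (f0 u + f1 u))) := fun u => by ring
    simp only [e]
    rw [intervalIntegral.integral_sub (my_ii (f := fun u => -f1 u) hf1.neg hx)
        (((my_ii hs hx).const_mul _).sub ((my_ii hus hx).const_mul _)),
      intervalIntegral.integral_sub ((my_ii hs hx).const_mul _) ((my_ii hus hx).const_mul _),
      intervalIntegral.integral_const_mul, intervalIntegral.integral_const_mul,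
      intervalIntegral.integral_neg]
    ring
  have hGc : ContinuousOn G (Icc (0:ℝ) 1) := fun x hx => (my_ftc hs hx).continuousWithinAt
  constructor
  · intro a
    refine ⟨by rw [hg0]; simp, by rw [hg1]; simp, ?_⟩
    refine ⟨fun x => f0 x - lam * G x + a * lam, fun x => -f1 x - lam * G x + a * lam,
      (hf0.sub (continuousOn_const.mul hGc)).add continuousOn_const,
      (hf1.neg.sub (continuousOn_const.mul hGc)).add continuousOn_const, ?_⟩
    intro x hx
    have dF0 := my_ftc hf0 hx
    have dF1 := my_ftc hf1 hx
    have dG := my_ftc hs hx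
    have dH := my_ftc hus hx
    have hid : HasDerivWithinAt (fun y : ℝ => y) 1 (Icc (0:ℝ) 1) x := hasDerivWithinAt_id x _
    have hd0 : HasDerivWithinAt (g0 a) (f0 x - lam * G x + a * lam) (Icc 0 1) x := by
      have h := (dF0.sub (((hid.mul dG).sub dH).const_mul lam)).add
        ((hid.const_mul (a * lam)))
      have h' := HasDerivWithinAt.congr (f₁ := g0 a) h
        (fun y hy => by rw [hg0, key0 y hy]; rfl) (by rw [hg0, key0 x hx]; rfl)
      refine h'.congr_deriv ?_
      ring
    have hd1 : HasDerivWithinAt (g1 a) (-f1 x - lam * G x + a * lam) (Icc 0 1) x := by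
      have h := (dF1.neg.sub (((hid.mul dG).sub dH).const_mul lam)).add
        (((hid.const_mul lam).add_const 1).const_mul a)
      have h' := HasDerivWithinAt.congr (f₁ := g1 a) h
        (fun y hy => by rw [hg1, key1 y hy]; rfl) (by rw [hg1, key1 x hx]; rfl)
      refine h'.congr_deriv ?_
      ring
    refine ⟨hd0, hd1, ?_, ?_⟩
    · show -(f0 x - lam * G x + a * lam) + lam * (g1 a x - g0 a x) = -(f0 x)
      rw [hg0, hg1, key0 x hx, key1 x hx, hGsplit x hx]; ring
    · show (-f1 x - lam * G x + a * lam) + lam * (g0 a x - g1 a x) = -(f1 x)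
      rw [hg0, hg1, key0 x hx, key1 x hx, hGsplit x hx]; ring
  · have h1 : lam + 1 ≠ 0 := by positivity
    set K : ℝ := ∫ u in (0:ℝ)..1, (-f1 u - lam * (1 - u) * (f0 u + f1 u)) with hK
    refine ⟨-K / (lam + 1), ?_, ?_⟩
    · show g1 (-K / (lam + 1)) 1 = 0
      rw [hg1]
      field_simp
      rw [← hK]; ring
    · intro b hb
      rw [hg1] at hb
      rw [← hK] at hb
      rw [eq_div_iff h1]
      ring_nf
      ring_nf at hb
      linarith [hb]
end
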